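/- arXiv:2106.01853 — 8 statements merged into one kernel-verified Lean document; each statement's English description precedes it below -/
import Mathlib

section
/- Let k be a perfect field with algebraic closure K, and let m, d ∈ ℕ. Let X ⊆ K^m be an algebraic set that is d-bounded (i.e. X = V(I) for some set I of polynomials over K of total degree at most d). If X is stable under the coordinatewise action of every field automorphism of K fixing k pointwise, then X is d-bounded over k. -/
noncomputable section

/-- The zero set `V(I)` of a set `I` of multivariate polynomials over a field `K`. -/
def zeroSetK (K : Type) [Field K] {σ : Type} (I : Set (MvPolynomial σ K)) :
    Set (σ → K) :=
  {a | ∀ f ∈ I, MvPolynomial.eval a f = 0}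

open MvPolynomial

/-- Evaluation commutes with mapping a polynomial and the point by an automorphism. -/
lemma eval_map_algEquiv_aux (k K : Type) [Field k] [Field K] [Algebra k K] {m : ℕ}
    (σ : K ≃ₐ[k] K) (f : MvPolynomial (Fin m) K) (b : Fin m → K) :
    eval (fun i => σ (b i)) (map (σ : K →+* K) f) = σ (eval b f) := by
  rw [eval_map]
  have := eval₂_comp_left (σ : K →+* K) (RingHom.id K) b f
  simp only [RingHom.comp_id, eval₂_id] at this
  exact this.symm

/-- Dedekind's independence of characters, in the form we need. -/
lemma dedekind_aux (k L K : Type) [Field k] [Field L] [Field K] [Algebra k L] [Algebra L K]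
    [Fintype (L ≃ₐ[k] L)] (u : (L ≃ₐ[k] L) → K)
    (h : ∀ c : L, ∑ τ : L ≃ₐ[k] L, u τ * algebraMap L K (τ c) = 0) : ∀ τ, u τ = 0 := by
  classical
  let χ : (L ≃ₐ[k] L) → (L →* K) := fun τ => ((algebraMap L K).comp (τ : L →+* L)).toMonoidHom
  have hinj : Function.Injective χ := by
    intro τ τ' hh
    ext c
    have h2 : (χ τ) c = (χ τ') c := DFunLike.congr_fun hh c
    simp only [χ, RingHom.toMonoidHom_eq_coe, MonoidHom.coe_coe, RingHom.coe_comp,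
      Function.comp_apply] at h2
    exact (algebraMap L K).injective (by simpa using h2)
  have hli : LinearIndependent K (fun τ => ⇑(χ τ)) :=
    (linearIndependent_monoidHom L K).comp χ hinj
  have := Fintype.linearIndependent_iff.1 hli u ?_
  · exact this
  · funext c
    simpa [χ, mul_comm] using h c

/-- An element of a finite Galois extension fixed by all automorphisms lies in the
range of the base field. -/
lemma fixed_mem_bot_aux (k L : Type) [Field k] [Field L] [Algebra k L] [FiniteDimensional k L]
    [IsGalois k L] (x : L) (hx : ∀ σ : L ≃ₐ[k] L, σ x = x) :
    x ∈ Set.range (algebraMap k L) := by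
  rw [← IntermediateField.mem_bot (F := k)]
  rw [← IsGalois.fixedField_fixingSubgroup (⊥ : IntermediateField k L)]
  intro g
  exact hx g.1

set_option maxHeartbeats 1000000
set_option synthInstance.maxHeartbeats 400000

/-- **Folklore Lemma, automorphism case**: let `k` be a perfect field with algebraic
closure `K`, and let `X ⊆ K^m` be an algebraic set that is `d`-bounded.  If `X` is stable
under the coordinatewise action of every automorphism of `K` fixing `k` pointwise, then
`X` is `d`-bounded over `k`. -/
theorem stmt4 (k K : Type) [Field k] [PerfectField k] [Field K] [Algebra k K]
    [IsAlgClosure k K] (m d : ℕ) (X : Set (Fin m → K))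
    (hX : ∃ I : Set (MvPolynomial (Fin m) K),
      X = zeroSetK K I ∧ ∀ f ∈ I, f.totalDegree ≤ d)
    (hstab : ∀ σ : K ≃ₐ[k] K, ∀ a ∈ X, (fun i => σ (a i)) ∈ X) :
    ∃ I : Set (MvPolynomial (Fin m) K), X = zeroSetK K I ∧
      ∀ f ∈ I, f.totalDegree ≤ d ∧ ∀ mo, f.coeff mo ∈ Set.range (algebraMap k K) := by
  classical
  haveI : IsGalois k K := {}
  obtain ⟨I, hXI, hId⟩ := hX
  refine ⟨{g | g.totalDegree ≤ d ∧ (∀ mo, g.coeff mo ∈ Set.range (algebraMap k K)) ∧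
      ∀ b ∈ X, MvPolynomial.eval b g = 0}, ?_, fun g hg => ⟨hg.1, hg.2.1⟩⟩
  apply Set.Subset.antisymm
  · intro b hb g hg
    exact hg.2.2 b hb
  intro a ha
  by_contra hax
  -- find `f ∈ I` with `f a ≠ 0`
  have hf : ∃ f ∈ I, MvPolynomial.eval a f ≠ 0 := by
    by_contra h
    push_neg at h
    exact hax (hXI ▸ (h : a ∈ zeroSetK K I))
  obtain ⟨f, hfI, hfa⟩ := hf
  have hfd : f.totalDegree ≤ d := hId f hfI
  have hfX : ∀ b ∈ X, MvPolynomial.eval b f = 0 := fun b hb => by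
    rw [hXI] at hb; exact hb f hfI
  -- the finite Galois extension generated by the coefficients of `f`
  set S : Set K := ↑(f.support.image fun mo => f.coeff mo) with hS
  haveI : Finite S := inferInstance
  set L := FiniteGaloisIntermediateField.adjoin k S with hL
  have hcoeff : ∀ mo, f.coeff mo ∈ L.toIntermediateField := by
    intro mo
    by_cases h : f.coeff mo = 0
    · rw [h]; exact zero_mem _
    · exact FiniteGaloisIntermediateField.subset_adjoin k S
        (Finset.mem_coe.2 (Finset.mem_image.2 ⟨mo, mem_support_iff.2 h, rfl⟩))
  set L' := L.toIntermediateField with hL'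
  let e : (Fin m →₀ ℕ) → ↥L' := fun mo => ⟨f.coeff mo, hcoeff mo⟩
  have he : ∀ mo, f.coeff mo = algebraMap ↥L' K (e mo) := fun mo => rfl
  have hsurj : Function.Surjective
      (AlgEquiv.restrictNormalHom (F := k) (K₁ := K) L') :=
    AlgEquiv.restrictNormalHom_surjective K
  haveI : Fintype (↥L' ≃ₐ[k] ↥L') := AlgEquiv.fintype k _
  set lift : (↥L' ≃ₐ[k] ↥L') → (K ≃ₐ[k] K) := Function.surjInv hsurj with hlift
  have hcomm : ∀ (τ : ↥L' ≃ₐ[k] ↥L') (x : ↥L'),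
      (lift τ) (algebraMap ↥L' K x) = algebraMap ↥L' K (τ x) := by
    intro τ x
    have h1 := AlgEquiv.restrictNormalHom_apply (F := k) L' (lift τ) x
    rw [Function.surjInv_eq hsurj τ] at h1
    exact h1.symm
  -- the family of candidate polynomials
  set g : ↥L' → MvPolynomial (Fin m) K := fun c =>
    ∑ τ : ↥L' ≃ₐ[k] ↥L', (algebraMap ↥L' K (τ c)) •
      MvPolynomial.map ((lift τ : K ≃ₐ[k] K) : K →+* K) f with hg
  -- coefficients of `g c`
  have hgcoeff : ∀ (c : ↥L') (mo : Fin m →₀ ℕ),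
      (g c).coeff mo = algebraMap ↥L' K (∑ τ : ↥L' ≃ₐ[k] ↥L', τ (c * e mo)) := by
    intro c mo
    rw [hg]
    simp only [MvPolynomial.coeff_sum, MvPolynomial.coeff_smul, MvPolynomial.coeff_map,
      smul_eq_mul]
    rw [map_sum (algebraMap ↥L' K)]
    refine Finset.sum_congr rfl fun τ _ => ?_
    rw [map_mul]
    congr 1
    rw [he mo]
    exact hcomm τ (e mo)
  -- each coefficient of `g c` lies in the base field
  have hgbase : ∀ (c : ↥L') (mo : Fin m →₀ ℕ),
      (g c).coeff mo ∈ Set.range (algebraMap k K) := by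
    intro c mo
    rw [hgcoeff c mo]
    have hfix : ∀ σ' : ↥L' ≃ₐ[k] ↥L',
        σ' (∑ τ : ↥L' ≃ₐ[k] ↥L', τ (c * e mo)) = ∑ τ : ↥L' ≃ₐ[k] ↥L', τ (c * e mo) := by
      intro σ'
      rw [map_sum]
      exact Fintype.sum_equiv (Equiv.mulLeft σ') _ _ (fun τ => rfl)
    obtain ⟨y, hy⟩ := fixed_mem_bot_aux k ↥L' _ hfix
    exact ⟨y, by rw [IsScalarTower.algebraMap_apply k ↥L' K, hy]⟩
  -- total degree bound
  have hgdeg : ∀ c : ↥L', (g c).totalDegree ≤ d := by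
    intro c
    rw [hg]
    refine (MvPolynomial.totalDegree_finset_sum _ _).trans (Finset.sup_le fun τ _ => ?_)
    refine (MvPolynomial.totalDegree_smul_le _ _).trans ?_
    refine le_trans ?_ hfd
    exact Finset.sup_le fun mo hmo =>
      MvPolynomial.le_totalDegree (MvPolynomial.support_map_subset _ _ hmo)
  -- vanishing on X
  have hgX : ∀ (c : ↥L'), ∀ b ∈ X, MvPolynomial.eval b (g c) = 0 := by
    intro c b hb
    rw [hg]
    simp only [map_sum, MvPolynomial.smul_eval]
    refine Finset.sum_eq_zero fun τ _ => ?_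
    set σ := lift τ with hσ
    have hb' : (fun i => σ.symm (b i)) ∈ X := hstab σ.symm b hb
    have hbb : b = fun i => σ (σ.symm (b i)) := by funext i; rw [AlgEquiv.apply_symm_apply]
    rw [hbb]
    rw [eval_map_algEquiv_aux k K σ f (fun i => σ.symm (b i))]
    rw [hfX _ hb', map_zero, mul_zero]
  -- `map (lift 1) f = f`
  have hone : MvPolynomial.map ((lift 1 : K ≃ₐ[k] K) : K →+* K) f = f := by
    ext mo
    rw [MvPolynomial.coeff_map, he mo]
    exact (hcomm 1 (e mo)).trans (by rw [AlgEquiv.one_apply])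
  -- nonvanishing at `a` for some `c`
  have hnz : ∃ c : ↥L', MvPolynomial.eval a (g c) ≠ 0 := by
    by_contra h
    push_neg at h
    have h' : ∀ c : ↥L', ∑ τ : ↥L' ≃ₐ[k] ↥L',
        (MvPolynomial.eval a (MvPolynomial.map ((lift τ : K ≃ₐ[k] K) : K →+* K) f))
          * algebraMap ↥L' K (τ c) = 0 := by
      intro c
      have := h c
      rw [hg] at this
      simp only [map_sum, MvPolynomial.smul_eval] at this
      rw [← this]
      exact Finset.sum_congr rfl fun τ _ => mul_comm _ _
    have := dedekind_aux k ↥L' K _ h' 1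
    rw [hone] at this
    exact hfa this
  obtain ⟨c, hc⟩ := hnz
  exact hc (ha (g c) ⟨hgdeg c, hgbase c, hgX c⟩)
end
end

section
/- Let K be an algebraically closed field, k a subfield of K, and m, d ∈ ℕ. Let X ⊆ K^m be an algebraic set that is d-bounded (i.e. X = V(I) for some set I of polynomials over K of total degree at most d). If X ∩ k^m is Zariski-dense in X, that is, the smallest algebraic subset of K^m containing X ∩ k^m equals X, then X is d-bounded over k. -/
noncomputable section

/-- The Zariski closure over `K`: the smallest algebraic set containing `Y`. -/
def zariskiClosureK (K : Type) [Field K] {σ : Type} (Y : Set (σ → K)) : Set (σ → K) :=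
  zeroSetK K {f : MvPolynomial σ K | ∀ a ∈ Y, MvPolynomial.eval a f = 0}

open MvPolynomial

/-- **Folklore Lemma, density case**: let `K` be an algebraically closed field, `k` a
subfield, and `X ⊆ K^m` a `d`-bounded algebraic set.  If `X ∩ k^m` is Zariski-dense in
`X`, then `X` is `d`-bounded over `k`. -/
theorem stmt5 (K : Type) [Field K] [IsAlgClosed K] (k : Subfield K) (m d : ℕ)
    (X : Set (Fin m → K))
    (hX : ∃ I : Set (MvPolynomial (Fin m) K),
      X = zeroSetK K I ∧ ∀ f ∈ I, f.totalDegree ≤ d)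
    (hdense : zariskiClosureK K (X ∩ {a | ∀ i, a i ∈ k}) = X) :
    ∃ I : Set (MvPolynomial (Fin m) K), X = zeroSetK K I ∧
      ∀ f ∈ I, f.totalDegree ≤ d ∧ ∀ mo, f.coeff mo ∈ k := by
  classical
  obtain ⟨I, hXI, hId⟩ := hX
  set J : Set (MvPolynomial (Fin m) K) :=
    {f | f.totalDegree ≤ d ∧ (∀ mo, f.coeff mo ∈ k) ∧
      ∀ a ∈ X ∩ {a | ∀ i, a i ∈ k}, MvPolynomial.eval a f = 0} with hJ
  refine ⟨J, Set.Subset.antisymm ?_ ?_, fun f hf => ⟨hf.1, hf.2.1⟩⟩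
  · intro a ha f hf
    rw [← hdense] at ha
    exact ha f hf.2.2
  · intro a ha
    rw [hXI]
    intro f hfI
    -- decompose f over a k-basis of K
    set b := Module.Basis.ofVectorSpace k K with hb
    set comp : Module.Basis.ofVectorSpaceIndex k K → MvPolynomial (Fin m) K :=
      fun j => ∑ mo ∈ f.support, monomial mo ((b.repr (f.coeff mo) j : K)) with hcompdef
    set S : Finset (Module.Basis.ofVectorSpaceIndex k K) :=
      f.support.biUnion (fun mo => (b.repr (f.coeff mo)).support) with hS
    have hcomp : ∀ j mo, (comp j).coeff mo = (b.repr (f.coeff mo) j : K) := by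
      intro j mo
      rw [hcompdef]
      simp only [coeff_sum, coeff_monomial]
      by_cases h : mo ∈ f.support
      · rw [Finset.sum_ite_eq', if_pos h]
      · rw [MvPolynomial.notMem_support_iff.mp h]
        simp only [map_zero, Finsupp.coe_zero, Pi.zero_apply, ZeroMemClass.coe_zero]
        exact Finset.sum_eq_zero fun mo' hmo' => by
          rw [if_neg]
          intro hEq
          exact h (hEq ▸ hmo')
    have hrepr : f = ∑ j ∈ S, (b j : K) • comp j := by
      ext mo
      rw [coeff_sum]
      simp only [coeff_smul, hcomp, smul_eq_mul]
      have hsub : (b.repr (f.coeff mo)).support ⊆ S := by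
        by_cases h : mo ∈ f.support
        · exact fun j hj => Finset.mem_biUnion.2 ⟨mo, h, hj⟩
        · rw [MvPolynomial.notMem_support_iff.mp h]; simp
      have hsumrepr : ∀ x : K, ∑ j ∈ (b.repr x).support, (b.repr x j : K) * (b j) = x := by
        intro x
        conv_rhs => rw [← b.linearCombination_repr x]
        rw [Finsupp.linearCombination_apply, Finsupp.sum]
        exact Finset.sum_congr rfl fun j _ => (Subfield.smul_def ((b.repr x) j) (b j)).symm
      conv_lhs => rw [← hsumrepr (f.coeff mo),
        Finset.sum_subset hsub (fun j _ hj => by rw [Finsupp.notMem_support_iff.mp hj]; simp)]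
      exact Finset.sum_congr rfl fun j _ => mul_comm _ _
    -- comp j has coefficients in k and total degree ≤ d
    have hmemk : ∀ j mo, (comp j).coeff mo ∈ k := fun j mo => by
      rw [hcomp]; exact (b.repr (f.coeff mo) j).2
    have hdeg : ∀ j, (comp j).totalDegree ≤ d := by
      intro j
      refine Finset.sup_le fun mo hmo => ?_
      have : f.coeff mo ≠ 0 := by
        intro h0
        have := MvPolynomial.mem_support_iff.mp hmo
        rw [hcomp, h0] at this
        simp at this
      exact le_trans (le_totalDegree (MvPolynomial.mem_support_iff.2 this)) (hId f hfI)
    -- comp j vanishes on X ∩ k^m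
    have hvanish : ∀ j ∈ S, ∀ a' ∈ X ∩ {a | ∀ i, a i ∈ k}, MvPolynomial.eval a' (comp j) = 0 := by
      intro j hjS a' ha'
      -- eval a' (comp j) ∈ k
      have hevalk : ∀ j', MvPolynomial.eval a' (comp j') ∈ k := by
        intro j'
        rw [hcompdef]
        simp only [map_sum, eval_monomial]
        refine Subfield.sum_mem k fun mo _ => Subfield.mul_mem k (SetLike.coe_mem _) ?_
        exact Subfield.prod_mem k fun i _ => Subfield.pow_mem k (ha'.2 i) _
      set g : Module.Basis.ofVectorSpaceIndex k K → k := fun j' => ⟨_, hevalk j'⟩ with hg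
      have hf0 : MvPolynomial.eval a' f = 0 := by
        rw [hXI] at ha'
        exact ha'.1 f hfI
      have hsum : ∑ j' ∈ S, g j' • b j' = 0 := by
        have : MvPolynomial.eval a' f = ∑ j' ∈ S, (b j' : K) * MvPolynomial.eval a' (comp j') := by
          conv_lhs => rw [hrepr]
          simp [smul_eval]
        rw [hf0] at this
        calc ∑ j' ∈ S, g j' • b j' = ∑ j' ∈ S, (b j' : K) * MvPolynomial.eval a' (comp j') := by
              refine Finset.sum_congr rfl fun j' _ => ?_
              rw [Subfield.smul_def]
              show ((g j' : K)) * _ = _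
              rw [hg, mul_comm]
          _ = 0 := this.symm
      have hlin := linearIndependent_iff'.mp b.linearIndependent S g hsum j hjS
      have : (g j : K) = 0 := by rw [hlin]; simp
      rw [hg] at this
      exact this
    -- conclude
    have : MvPolynomial.eval a f = ∑ j ∈ S, (b j : K) * MvPolynomial.eval a (comp j) := by
      conv_lhs => rw [hrepr]
      simp [smul_eval]
    rw [this]
    refine Finset.sum_eq_zero fun j hj => ?_
    have hcJ : comp j ∈ J := ⟨hdeg j, hmemk j, hvanish j hj⟩
    rw [ha (comp j) hcJ, mul_zero]
end
end

section
/- Let n ∈ ℕ and let G be a closed subgroup of GL_n(ℚ̄) that is defined over ℚ, i.e. G = V(I) for some set I of polynomials with rational coefficients. Then the Zariski closure U := Zcl(⟨{g ∈ G : g is unipotent}⟩) of the subgroup of G generated by the unipotent elements of G is an irreducible algebraic set: U is nonempty and U cannot be written as a union X₁ ∪ X₂ of two algebraic sets with X₁ ≠ U and X₂ ≠ U. -/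
noncomputable section

open scoped MatrixGroups
open MvPolynomial

/-- The field of algebraic numbers. -/
abbrev Qbar : Type := AlgebraicClosure ℚ

/-- The zero set `V(I)` of a set `I` of multivariate polynomials over `ℚ̄`. -/
def zeroSet {σ : Type} (I : Set (MvPolynomial σ Qbar)) : Set (σ → Qbar) :=
  {a | ∀ f ∈ I, MvPolynomial.eval a f = 0}

/-- A subset of affine space over `ℚ̄` is an algebraic set if it is a zero set. -/
def IsAlgebraicSet {σ : Type} (X : Set (σ → Qbar)) : Prop :=
  ∃ I : Set (MvPolynomial σ Qbar), X = zeroSet I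

/-- The Zariski closure: the smallest algebraic set containing `Y`. -/
def zariskiClosure {σ : Type} (Y : Set (σ → Qbar)) : Set (σ → Qbar) :=
  zeroSet {f : MvPolynomial σ Qbar | ∀ a ∈ Y, MvPolynomial.eval a f = 0}

/-- `X` is `d`-bounded over `ℚ`: it is the zero set of a set of polynomials of total
degree at most `d` with rational coefficients. -/
def BoundedOverQ {σ : Type} (X : Set (σ → Qbar)) (d : ℕ) : Prop :=
  ∃ I : Set (MvPolynomial σ Qbar), X = zeroSet I ∧
    ∀ f ∈ I, f.totalDegree ≤ d ∧ ∀ m, f.coeff m ∈ Set.range (algebraMap ℚ Qbar)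

/-- Coordinates for the affine space `ℚ̄^{n²+1}` in which `GL_n(ℚ̄)` is embedded. -/
abbrev glIdx (n : ℕ) : Type := (Fin n × Fin n) ⊕ Unit

/-- The point `(M, det(M)⁻¹)` of `ℚ̄^{n²+1}` associated to `g ∈ GL_n(ℚ̄)`. -/
def glPoint {n : ℕ} (g : GL (Fin n) Qbar) : glIdx n → Qbar :=
  Sum.elim (fun p => (g : Matrix (Fin n) (Fin n) Qbar) p.1 p.2)
    (fun _ => ((g : Matrix (Fin n) (Fin n) Qbar).det)⁻¹)

/-- The matrix part of a point of `ℚ̄^{n²+1}`. -/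
def pointMatrix {n : ℕ} (a : glIdx n → Qbar) : Matrix (Fin n) (Fin n) Qbar :=
  Matrix.of fun i j => a (Sum.inl (i, j))

/-- The height of a rational number `a/b` in lowest terms is `max |a| b`. -/
def ratHeight (q : ℚ) : ℕ := max q.num.natAbs q.den

/-- `g` has rational entries, i.e. `g ∈ GL_n(ℚ)`. -/
def HasRatEntries {n : ℕ} (g : GL (Fin n) Qbar) : Prop :=
  ∀ i j, ∃ q : ℚ, (g : Matrix (Fin n) (Fin n) Qbar) i j = algebraMap ℚ Qbar q

/-- `g` has rational entries of height at most `h`. -/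
def EntriesHeightLE {n : ℕ} (g : GL (Fin n) Qbar) (h : ℕ) : Prop :=
  ∀ i j, ∃ q : ℚ, (g : Matrix (Fin n) (Fin n) Qbar) i j = algebraMap ℚ Qbar q ∧ ratHeight q ≤ h

/-- A matrix `g` is unipotent if `(g - 1)^n = 0`. -/
def IsUnipotent {n : ℕ} (g : GL (Fin n) Qbar) : Prop :=
  ((g : Matrix (Fin n) (Fin n) Qbar) - 1) ^ n = 0

/-- A matrix is semisimple if it is diagonalizable over `ℚ̄`. -/
def IsSemisimpleMat {n : ℕ} (M : Matrix (Fin n) (Fin n) Qbar) : Prop :=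
  ∃ (P : GL (Fin n) Qbar) (dvec : Fin n → Qbar),
    M = (P : Matrix (Fin n) (Fin n) Qbar) * Matrix.diagonal dvec *
      ((P⁻¹ : GL (Fin n) Qbar) : Matrix (Fin n) (Fin n) Qbar)

/-- Iterated base-2 exponentiation: `iexp 0 x = x`, `iexp (k+1) x = 2 ^ iexp k x`. -/
def iexp : ℕ → ℕ → ℕ
  | 0, x => x
  | k + 1, x => 2 ^ iexp k x


/-- `X` is defined over `ℚ`: it is the zero set of a set of polynomials with rational
coefficients. -/
def DefinedOverQ {σ : Type} (X : Set (σ → Qbar)) : Prop :=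
  ∃ I : Set (MvPolynomial σ Qbar), X = zeroSet I ∧
    ∀ f ∈ I, ∀ m, f.coeff m ∈ Set.range (algebraMap ℚ Qbar)

/-- The Zariski closure of the subgroup generated by the unipotent elements of `G`. -/
def unipClosure (n : ℕ) (G : Subgroup (GL (Fin n) Qbar)) : Set (glIdx n → Qbar) :=
  zariskiClosure (glPoint ''
    ((Subgroup.closure {g : GL (Fin n) Qbar | g ∈ G ∧ IsUnipotent g} :
      Subgroup (GL (Fin n) Qbar)) : Set (GL (Fin n) Qbar)))


namespace Stmt7Aux

abbrev Mat (n : ℕ) := Matrix (Fin n) (Fin n) Qbar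

/-- determinant of `1 + nilpotent` is 1 -/
lemma det_one_add_nilpotent {n : ℕ} (N : Mat n) (hN : N ^ n = 0) : (1 + N).det = 1 := by
  have hnil : IsNilpotent (-N) := ⟨n, by rw [neg_pow]; simp [hN]⟩
  have hchar : (-N).charpoly = Polynomial.X ^ n := by
    have h1 := Matrix.isNilpotent_charpoly_sub_pow_of_isNilpotent hnil
    have h2 : (-N).charpoly - Polynomial.X ^ (Fintype.card (Fin n)) = 0 := h1.eq_zero
    rw [sub_eq_zero] at h2
    simpa using h2
  have hmap : (Matrix.charmatrix (-N)).map (Polynomial.evalRingHom (1 : Qbar)) = 1 + N := by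
    ext i j
    rcases eq_or_ne i j with rfl | hij
    · simp [Matrix.charmatrix_apply_eq]
    · simp [Matrix.charmatrix_apply_ne _ _ _ hij, hij, Matrix.one_apply_ne hij]
  have := (Polynomial.evalRingHom (1 : Qbar)).map_det (Matrix.charmatrix (-N))
  rw [RingHom.mapMatrix_apply, hmap] at this
  have hc : (Polynomial.evalRingHom (1 : Qbar)) (Matrix.charpoly (-N)) = 1 := by
    rw [hchar]; simp
  rw [Matrix.charpoly] at hc
  rw [← this, hc]

/-- grid vanishing lemma -/
lemma grid : ∀ {m : ℕ} (p : MvPolynomial (Fin m) Qbar),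
    (∀ t : Fin m → ℕ, eval (fun i => ((t i : ℕ) : Qbar)) p = 0) → p = 0 := by
  intro m
  induction m with
  | zero =>
    intro p h
    apply MvPolynomial.funext
    intro x
    have hx : x = fun i : Fin 0 => (((fun _ => 0) i : ℕ) : Qbar) := by
      funext i; exact i.elim0
    rw [map_zero, hx]
    exact h (fun _ => 0)
  | succ m ih =>
    intro p h
    have hq : ∀ k, (MvPolynomial.finSuccEquiv Qbar m p).coeff k = 0 := by
      intro k
      apply ih
      intro s
      have hmap : Polynomial.map (eval fun i => ((s i : ℕ) : Qbar))
          (MvPolynomial.finSuccEquiv Qbar m p) = 0 := by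
        apply Polynomial.eq_zero_of_infinite_isRoot
        apply Set.Infinite.mono (s := Set.range (Nat.cast : ℕ → Qbar))
        · rintro _ ⟨y, rfl⟩
          have hcons : (fun i => (((Fin.cons y s : Fin (m+1) → ℕ) i : ℕ) : Qbar)) =
              Fin.cons (y : Qbar) (fun i => ((s i : ℕ) : Qbar)) := by
            funext i
            refine Fin.cases ?_ ?_ i <;> simp
          have := h (Fin.cons y s)
          rw [hcons] at this
          rw [MvPolynomial.eval_eq_eval_mv_eval'] at this
          exact this
        · exact Set.infinite_range_of_injective Nat.cast_injective
      have := congrArg (fun q => Polynomial.coeff q k) hmap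
      simpa [Polynomial.coeff_map] using this
    have hz : MvPolynomial.finSuccEquiv Qbar m p = 0 := Polynomial.ext (by simp [hq])
    exact (MvPolynomial.finSuccEquiv Qbar m).injective (by simpa using hz)

/-- unipotent power formula -/
lemma unip_pow {n : ℕ} (N : Mat n) (hN : N ^ n = 0) (m : ℕ) :
    (1 + N) ^ m = ∑ j ∈ Finset.range n, (m.choose j : Qbar) • N ^ j := by
  have hsmul : ∀ (c : ℕ) (A : Mat n), (c : Qbar) • A = A * (c : Mat n) := by
    intro c A
    rw [Nat.cast_smul_eq_nsmul, nsmul_eq_mul']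
  have hstep : (1 + N) ^ m = ∑ j ∈ Finset.range (m + 1), (m.choose j : Qbar) • N ^ j := by
    rw [add_comm, (Commute.one_right N).add_pow]
    refine Finset.sum_congr rfl fun j hj => ?_
    rw [one_pow, mul_one, hsmul]
  have hzero : ∀ j ∈ Finset.range (m + 1 + n), j ∉ Finset.range (m + 1) →
      (m.choose j : Qbar) • N ^ j = 0 := by
    intro j _ hj
    rw [Finset.mem_range, not_lt] at hj
    rw [Nat.choose_eq_zero_of_lt (by omega)]
    simp
  have hzero' : ∀ j ∈ Finset.range (m + 1 + n), j ∉ Finset.range n →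
      (m.choose j : Qbar) • N ^ j = 0 := by
    intro j _ hj
    rw [Finset.mem_range, not_lt] at hj
    have : N ^ j = 0 := by
      rw [show j = n + (j - n) by omega, pow_add, hN, zero_mul]
    rw [this, smul_zero]
  rw [hstep,
    Finset.sum_subset (Finset.range_subset_range.mpr (by omega)) hzero,
    ← Finset.sum_subset (Finset.range_subset_range.mpr (by omega)) hzero']


/-- binomial coefficient polynomial in variable `X i` -/
def cpoly {k : ℕ} (j : ℕ) (i : Fin k) : MvPolynomial (Fin k) Qbar :=
  MvPolynomial.C (((Nat.factorial j : ℕ) : Qbar)⁻¹) *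
    ∏ r ∈ Finset.range j, (MvPolynomial.X i - MvPolynomial.C (r : Qbar))

lemma cpoly_eval {k : ℕ} (j : ℕ) (i : Fin k) (t : Fin k → Qbar) (m : ℕ)
    (ht : t i = (m : Qbar)) : eval t (cpoly j i) = (m.choose j : Qbar) := by
  have hprod : (∏ r ∈ Finset.range j, ((m : Qbar) - (r : Qbar)))
      = ((m.descFactorial j : ℕ) : Qbar) := by
    rcases lt_or_ge m j with hmj | hjm
    · rw [Finset.prod_eq_zero (Finset.mem_range.mpr hmj) (by simp),
        Nat.descFactorial_eq_zero_iff_lt.mpr hmj, Nat.cast_zero]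
    · rw [Nat.descFactorial_eq_prod_range, Nat.cast_prod]
      refine Finset.prod_congr rfl fun r hr => ?_
      rw [Finset.mem_range] at hr
      rw [Nat.cast_sub (le_trans hr.le hjm)]
  have hfac : ((Nat.factorial j : ℕ) : Qbar) ≠ 0 :=
    Nat.cast_ne_zero.mpr (Nat.factorial_ne_zero j)
  simp only [cpoly, map_mul, eval_C, map_prod, map_sub, eval_X, ht, hprod,
    Nat.descFactorial_eq_factorial_mul_choose, Nat.cast_mul]
  field_simp

variable {n : ℕ}

/-- the matrix of polynomials for the one-parameter word -/
def factorPoly {k : ℕ} (us : Fin k → GL (Fin n) Qbar) (i : Fin k) :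
    Matrix (Fin n) (Fin n) (MvPolynomial (Fin k) Qbar) :=
  ∑ j ∈ Finset.range n,
    cpoly j i • (((us i : Mat n) - 1) ^ j).map MvPolynomial.C

def Phi {k : ℕ} (us : Fin k → GL (Fin n) Qbar) : glIdx n → MvPolynomial (Fin k) Qbar :=
  Sum.elim (fun p => (List.ofFn (factorPoly us)).prod p.1 p.2) (fun _ => 1)

lemma eval_aeval {σ : Type} {k : ℕ} (Φ : σ → MvPolynomial (Fin k) Qbar)
    (t : Fin k → Qbar) (f : MvPolynomial σ Qbar) :
    eval t (aeval Φ f) = eval (fun c => eval t (Φ c)) f :=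
  eval₂Hom_bind₁ (RingHom.id Qbar) t Φ f

lemma factor_map {k : ℕ} (us : Fin k → GL (Fin n) Qbar) (i : Fin k) (t : Fin k → Qbar) :
    (factorPoly us i).map (eval t) =
      ∑ j ∈ Finset.range n, eval t (cpoly j i) • ((us i : Mat n) - 1) ^ j := by
  ext a b
  simp [factorPoly, Matrix.map_apply, Matrix.sum_apply, Matrix.smul_apply, smul_eq_mul]

lemma IsUnipotent.inv {u : GL (Fin n) Qbar} (h : IsUnipotent u) : IsUnipotent u⁻¹ := by
  unfold IsUnipotent at h ⊢
  have hinv : ((u⁻¹ : GL (Fin n) Qbar) : Mat n) * (u : Mat n) = 1 := by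
    rw [← Units.val_mul, inv_mul_cancel, Units.val_one]
  have hinv' : (u : Mat n) * ((u⁻¹ : GL (Fin n) Qbar) : Mat n) = 1 := by
    rw [← Units.val_mul, mul_inv_cancel, Units.val_one]
  have hcomm : Commute ((u⁻¹ : GL (Fin n) Qbar) : Mat n) (1 - (u : Mat n)) := by
    refine (Commute.one_right _).sub_right ?_
    exact (hinv.trans hinv'.symm)
  have heq : ((u⁻¹ : GL (Fin n) Qbar) : Mat n) - 1
      = ((u⁻¹ : GL (Fin n) Qbar) : Mat n) * (1 - (u : Mat n)) := by
    rw [mul_sub, mul_one, hinv]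
  rw [heq, hcomm.mul_pow, show (1 - (u : Mat n)) = -((u : Mat n) - 1) from (neg_sub _ _).symm,
    neg_pow, h, mul_zero, mul_zero]

lemma det_unip {n : ℕ} {u : GL (Fin n) Qbar} (h : IsUnipotent u) :
    ((u : Mat n)).det = 1 := by
  have := det_one_add_nilpotent ((u : Mat n) - 1) h
  rwa [add_comm, sub_add_cancel] at this

lemma coe_listProd {n k : ℕ} (gs : Fin k → GL (Fin n) Qbar) :
    (((List.ofFn gs).prod : GL (Fin n) Qbar) : Mat n)
      = (List.ofFn fun i => ((gs i : Mat n))).prod := by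
  have h := map_list_prod (Units.coeHom (Mat n)) (List.ofFn gs)
  rw [List.map_ofFn] at h
  simpa [Function.comp_def] using h

lemma wordPoint {n k : ℕ} (us : Fin k → GL (Fin n) Qbar) (hu : ∀ i, IsUnipotent (us i))
    (ms : Fin k → ℕ) :
    (fun c => eval (fun i => ((ms i : ℕ) : Qbar)) (Phi us c)) =
      glPoint ((List.ofFn fun i => us i ^ ms i).prod) := by
  set t : Fin k → Qbar := fun i => ((ms i : ℕ) : Qbar) with htdef
  set g : GL (Fin n) Qbar := (List.ofFn fun i => us i ^ ms i).prod with hg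
  have hfac : ∀ i, (factorPoly us i).map (eval t) =
      ((us i ^ ms i : GL (Fin n) Qbar) : Mat n) := by
    intro i
    rw [factor_map]
    have hc : ∀ j ∈ Finset.range n,
        eval t (cpoly j i) • ((us i : Mat n) - 1) ^ j
          = ((ms i).choose j : Qbar) • ((us i : Mat n) - 1) ^ j := by
      intro j _
      rw [cpoly_eval j i t (ms i) rfl]
    rw [Finset.sum_congr rfl hc, ← unip_pow _ (hu i) (ms i), add_comm, sub_add_cancel,
      Units.val_pow_eq_pow_val]
  have hW : ((List.ofFn (factorPoly us)).prod).map (eval t) = (g : Mat n) := by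
    have h1 : ((List.ofFn (factorPoly us)).prod).map (eval t)
        = (RingHom.mapMatrix (eval t : MvPolynomial (Fin k) Qbar →+* Qbar))
            (List.ofFn (factorPoly us)).prod := rfl
    rw [h1, map_list_prod, List.map_ofFn, hg, coe_listProd]
    refine congrArg List.prod (congrArg List.ofFn (funext fun i => ?_))
    simpa [RingHom.mapMatrix_apply] using hfac i
  have hdet : (g : Mat n).det = 1 := by
    rw [hg, coe_listProd, show (Matrix.det : Mat n → Qbar)
        ((List.ofFn fun i => ((us i ^ ms i : GL (Fin n) Qbar) : Mat n)).prod)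
      = (Matrix.detMonoidHom) ((List.ofFn fun i => ((us i ^ ms i : GL (Fin n) Qbar) : Mat n)).prod)
      from rfl, map_list_prod, List.map_ofFn]
    apply List.prod_eq_one
    intro x hx
    rw [List.mem_ofFn] at hx
    obtain ⟨i, rfl⟩ := hx
    simp only [Function.comp_apply, Matrix.detMonoidHom, MonoidHom.coe_mk, OneHom.coe_mk,
      Units.val_pow_eq_pow_val, Matrix.det_pow, det_unip (hu i), one_pow]
  funext c
  cases c with
  | inl p =>
    show eval t ((List.ofFn (factorPoly us)).prod p.1 p.2) = (g : Mat n) p.1 p.2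
    rw [← hW, Matrix.map_apply]
  | inr u =>
    simp only [Phi, Sum.elim_inr, map_one, glPoint, hdet, inv_one]

lemma vanish {n k : ℕ} (H : Subgroup (GL (Fin n) Qbar)) (f : MvPolynomial (glIdx n) Qbar)
    (hf : ∀ a ∈ glPoint '' (H : Set (GL (Fin n) Qbar)), eval a f = 0)
    (us : Fin k → GL (Fin n) Qbar) (hmem : ∀ i, us i ∈ H) (hu : ∀ i, IsUnipotent (us i)) :
    aeval (Phi us) f = 0 := by
  apply grid
  intro ms
  rw [eval_aeval, wordPoint us hu ms]
  apply hf
  refine ⟨_, ?_, rfl⟩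
  apply Subgroup.list_prod_mem
  intro x hx
  rw [List.mem_ofFn] at hx
  obtain ⟨i, rfl⟩ := hx
  exact pow_mem (hmem i) _

lemma prod_append_pow {n : ℕ} (l₀ l₁ : List (GL (Fin n) Qbar)) (e₀ e₁ : ℕ) :
    (List.ofFn fun i : Fin (l₀.length + l₁.length) =>
        (Fin.append l₀.get l₁.get i) ^ (Fin.append (fun _ => e₀) (fun _ => e₁) i)).prod
      = (l₀.map (· ^ e₀)).prod * (l₁.map (· ^ e₁)).prod := by
  rw [List.ofFn_add, List.prod_append]
  congr 1
  · have h : (fun i : Fin l₀.length =>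
        (Fin.append l₀.get l₁.get (Fin.castAdd l₁.length i)) ^
          (Fin.append (fun _ => e₀) (fun _ => e₁) (Fin.castAdd l₁.length i)))
        = fun i => (l₀.get i) ^ e₀ := by
      funext i
      rw [Fin.append_left, Fin.append_left]
    rw [show (fun i : Fin l₀.length => Fin.append l₀.get l₁.get (Fin.castLE (Nat.le_add_right _ _) i) ^
        Fin.append (fun _ => e₀) (fun _ => e₁) (Fin.castLE (Nat.le_add_right _ _) i))
        = fun i => (l₀.get i) ^ e₀ from h, show l₀.map (· ^ e₀) = (List.ofFn l₀.get).map (· ^ e₀) by rw [List.ofFn_get],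
      List.map_ofFn]
    rfl
  · have h : (fun i : Fin l₁.length =>
        (Fin.append l₀.get l₁.get (Fin.natAdd l₀.length i)) ^
          (Fin.append (fun _ => e₀) (fun _ => e₁) (Fin.natAdd l₀.length i)))
        = fun i => (l₁.get i) ^ e₁ := by
      funext i
      rw [Fin.append_right, Fin.append_right]
    rw [h, show l₁.map (· ^ e₁) = (List.ofFn l₁.get).map (· ^ e₁) by rw [List.ofFn_get],
      List.map_ofFn]
    rfl

lemma prime_step {n : ℕ} (G : Subgroup (GL (Fin n) Qbar))
    (f g : MvPolynomial (glIdx n) Qbar)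
    (hfg : ∀ a ∈ glPoint '' ((Subgroup.closure {x : GL (Fin n) Qbar | x ∈ G ∧ IsUnipotent x} :
        Subgroup (GL (Fin n) Qbar)) : Set (GL (Fin n) Qbar)), eval a (f * g) = 0)
    (hf : ∃ a ∈ glPoint '' ((Subgroup.closure {x : GL (Fin n) Qbar | x ∈ G ∧ IsUnipotent x} :
        Subgroup (GL (Fin n) Qbar)) : Set (GL (Fin n) Qbar)), eval a f ≠ 0) :
    ∀ a ∈ glPoint '' ((Subgroup.closure {x : GL (Fin n) Qbar | x ∈ G ∧ IsUnipotent x} :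
        Subgroup (GL (Fin n) Qbar)) : Set (GL (Fin n) Qbar)), eval a g = 0 := by
  set S := {x : GL (Fin n) Qbar | x ∈ G ∧ IsUnipotent x} with hS
  set H := Subgroup.closure S with hHdef
  obtain ⟨a₀, ⟨h₀, hh₀, rfl⟩, hf0⟩ := hf
  rintro _ ⟨h, hh, rfl⟩
  have hlist : ∀ x : GL (Fin n) Qbar, x ∈ H →
      ∃ l : List (GL (Fin n) Qbar), (∀ y ∈ l, y ∈ S) ∧ l.prod = x := by
    intro x hx
    have hsub : S ∪ S⁻¹ ⊆ S := by
      rintro y (hy | hy)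
      · exact hy
      · rw [Set.mem_inv] at hy
        refine ⟨?_, ?_⟩
        · have := inv_mem hy.1
          rwa [inv_inv] at this
        · have := IsUnipotent.inv hy.2
          rwa [inv_inv] at this
    have hx' : x ∈ Submonoid.closure (S ∪ S⁻¹) := by
      rw [← Subgroup.closure_toSubmonoid]
      exact hx
    have hx'' : x ∈ Submonoid.closure S :=
      Submonoid.closure_mono hsub hx'
    exact Submonoid.exists_list_of_mem_closure hx''
  obtain ⟨l₀, hl₀S, hl₀⟩ := hlist h₀ hh₀
  obtain ⟨l₁, hl₁S, hl₁⟩ := hlist (h₀⁻¹ * h) (mul_mem (inv_mem hh₀) hh)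
  set us : Fin (l₀.length + l₁.length) → GL (Fin n) Qbar := Fin.append l₀.get l₁.get with husdef
  have husS : ∀ i, us i ∈ S := by
    intro i
    induction i using Fin.addCases with
    | left i =>
      rw [husdef, Fin.append_left]
      exact hl₀S _ (List.get_mem l₀ i)
    | right i =>
      rw [husdef, Fin.append_right]
      exact hl₁S _ (List.get_mem l₁ i)
  have husU : ∀ i, IsUnipotent (us i) := fun i => (husS i).2
  have husH : ∀ i, us i ∈ H := fun i => Subgroup.subset_closure (husS i)
  have hvan := vanish H (f * g) hfg us husH husU
  rw [map_mul] at hvan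
  rcases mul_eq_zero.mp hvan with h0 | h0
  · exfalso
    apply hf0
    set ms : Fin (l₀.length + l₁.length) → ℕ :=
      Fin.append (fun _ => 1) (fun _ => 0) with hmsdef
    have he : eval (fun i => ((ms i : ℕ) : Qbar)) (aeval (Phi us) f) = 0 := by
      rw [h0, map_zero]
    rw [eval_aeval, wordPoint us husU ms] at he
    have hP : (List.ofFn fun i => us i ^ ms i).prod = h₀ := by
      rw [husdef, hmsdef, prod_append_pow]
      have h1 : (l₀.map (· ^ 1)).prod = h₀ := by
        rw [show ((· ^ 1) : GL (Fin n) Qbar → GL (Fin n) Qbar) = id from funext fun x => pow_one x,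
          List.map_id, hl₀]
      have h2 : (l₁.map (· ^ 0)).prod = 1 := by
        apply List.prod_eq_one
        intro x hx
        rw [List.mem_map] at hx
        obtain ⟨y, _, rfl⟩ := hx
        exact pow_zero y
      rw [h1, h2, mul_one]
    rw [hP] at he
    exact he
  · set ms : Fin (l₀.length + l₁.length) → ℕ :=
      Fin.append (fun _ => 1) (fun _ => 1) with hmsdef
    have he : eval (fun i => ((ms i : ℕ) : Qbar)) (aeval (Phi us) g) = 0 := by
      rw [h0, map_zero]
    rw [eval_aeval, wordPoint us husU ms] at he
    have hP : (List.ofFn fun i => us i ^ ms i).prod = h := by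
      rw [husdef, hmsdef, prod_append_pow]
      have hpow : ∀ l : List (GL (Fin n) Qbar), (l.map (· ^ 1)).prod = l.prod := by
        intro l
        rw [show ((· ^ 1) : GL (Fin n) Qbar → GL (Fin n) Qbar) = id from funext fun x => pow_one x,
          List.map_id]
      rw [hpow, hpow, hl₀, hl₁, mul_inv_cancel_left]
    rw [hP] at he
    exact he

end Stmt7Aux

lemma mem_unipClosure_iff {n : ℕ} (G : Subgroup (GL (Fin n) Qbar)) (a : glIdx n → Qbar) :
    a ∈ unipClosure n G ↔ ∀ f : MvPolynomial (glIdx n) Qbar,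
      (∀ b ∈ glPoint '' ((Subgroup.closure {g : GL (Fin n) Qbar | g ∈ G ∧ IsUnipotent g} :
        Subgroup (GL (Fin n) Qbar)) : Set (GL (Fin n) Qbar)), eval b f = 0) → eval a f = 0 :=
  Iff.rfl


/-- **Irreducibility of the unipotent-generated subgroup**: let `G` be a closed subgroup
of `GL_n(ℚ̄)` defined over `ℚ`.  Then `U = Zcl(⟨unipotent elements of G⟩)` is an
irreducible algebraic set: it is nonempty and is not the union of two algebraic proper
subsets. -/
theorem stmt7 (n : ℕ) (G : Subgroup (GL (Fin n) Qbar))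
    (hG : DefinedOverQ (glPoint '' (G : Set (GL (Fin n) Qbar)))) :
    (unipClosure n G).Nonempty ∧
    ∀ X₁ X₂ : Set (glIdx n → Qbar), IsAlgebraicSet X₁ → IsAlgebraicSet X₂ →
      unipClosure n G = X₁ ∪ X₂ → X₁ = unipClosure n G ∨ X₂ = unipClosure n G := by
  classical
  constructor
  · refine ⟨glPoint 1, ?_⟩
    rw [mem_unipClosure_iff]
    intro f hf
    exact hf _ ⟨1, Subgroup.one_mem _, rfl⟩
  · rintro X₁ X₂ ⟨I₁, rfl⟩ ⟨I₂, rfl⟩ hU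
    by_contra hcon
    push_neg at hcon
    obtain ⟨hne₁, hne₂⟩ := hcon
    have hsub₁ : zeroSet I₁ ⊆ unipClosure n G := hU ▸ Set.subset_union_left
    have hsub₂ : zeroSet I₂ ⊆ unipClosure n G := hU ▸ Set.subset_union_right
    have hex₁ : ∃ a ∈ unipClosure n G, a ∉ zeroSet I₁ := by
      by_contra hall
      push_neg at hall
      exact hne₁ (Set.Subset.antisymm hsub₁ hall)
    have hex₂ : ∃ a ∈ unipClosure n G, a ∉ zeroSet I₂ := by
      by_contra hall
      push_neg at hall
      exact hne₂ (Set.Subset.antisymm hsub₂ hall)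
    obtain ⟨a₁, ha₁U, ha₁⟩ := hex₁
    obtain ⟨a₂, ha₂U, ha₂⟩ := hex₂
    simp only [zeroSet, Set.mem_setOf_eq] at ha₁ ha₂
    push_neg at ha₁ ha₂
    obtain ⟨f₁, hf₁I, hf₁a⟩ := ha₁
    obtain ⟨f₂, hf₂I, hf₂a⟩ := ha₂
    have hYU : ∀ b ∈ glPoint '' ((Subgroup.closure {g : GL (Fin n) Qbar | g ∈ G ∧ IsUnipotent g} :
        Subgroup (GL (Fin n) Qbar)) : Set (GL (Fin n) Qbar)), b ∈ unipClosure n G := by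
      intro b hb
      rw [mem_unipClosure_iff]
      intro f hf
      exact hf b hb
    have hfg : ∀ a ∈ glPoint '' ((Subgroup.closure {g : GL (Fin n) Qbar | g ∈ G ∧ IsUnipotent g} :
        Subgroup (GL (Fin n) Qbar)) : Set (GL (Fin n) Qbar)), eval a (f₁ * f₂) = 0 := by
      intro a ha
      have hmem : a ∈ zeroSet I₁ ∪ zeroSet I₂ := hU ▸ hYU a ha
      rcases hmem with hm | hm
      · rw [map_mul, hm f₁ hf₁I, zero_mul]
      · rw [map_mul, hm f₂ hf₂I, mul_zero]
    by_cases hv : ∀ a ∈ glPoint '' ((Subgroup.closure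
        {g : GL (Fin n) Qbar | g ∈ G ∧ IsUnipotent g} :
        Subgroup (GL (Fin n) Qbar)) : Set (GL (Fin n) Qbar)), eval a f₁ = 0
    · exact hf₁a ((mem_unipClosure_iff G a₁).mp ha₁U f₁ hv)
    · push_neg at hv
      have hg2 := Stmt7Aux.prime_step G f₁ f₂ hfg hv
      exact hf₂a ((mem_unipClosure_iff G a₂).mp ha₂U f₂ hg2)
end
end

section
/- Let n ∈ ℕ and let g ∈ GL_n(ℚ̄) be a unipotent matrix. Then the Zariski closure Zcl(⟨g⟩) of the cyclic subgroup generated by g is an irreducible algebraic set: it is nonempty and cannot be written as a union X₁ ∪ X₂ of two algebraic sets with X₁ ≠ Zcl(⟨g⟩) and X₂ ≠ Zcl(⟨g⟩). -/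
noncomputable section

open scoped MatrixGroups
open MvPolynomial

namespace Stmt8Aux

open Polynomial

/-- The binomial-coefficient polynomial `x(x-1)⋯(x-j+1)/j!`. -/
def bp (j : ℕ) : Polynomial Qbar :=
  Polynomial.C ((j.factorial : Qbar)⁻¹) *
    ∏ i ∈ Finset.range j, (Polynomial.X - Polynomial.C (i : Qbar))

lemma eval_bp (j : ℕ) (x : Qbar) :
    (bp j).eval x = (j.factorial : Qbar)⁻¹ * ∏ i ∈ Finset.range j, (x - (i : Qbar)) := by
  simp [bp, Polynomial.eval_prod]

lemma pascal (j : ℕ) (x : Qbar) :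
    (bp (j+1)).eval (x+1) = (bp (j+1)).eval x + (bp j).eval x := by
  have h1 : ∏ i ∈ Finset.range (j+1), (x + 1 - (i:Qbar)) =
      (∏ i ∈ Finset.range j, (x - (i:Qbar))) * (x+1) := by
    rw [Finset.prod_range_succ']
    congr 1
    · apply Finset.prod_congr rfl; intro i _; push_cast; ring
    · norm_num
  have h2 : ∏ i ∈ Finset.range (j+1), (x - (i:Qbar)) =
      (∏ i ∈ Finset.range j, (x - (i:Qbar))) * (x - (j:Qbar)) := Finset.prod_range_succ _ _
  have hj : ((j.factorial : Qbar)) ≠ 0 := by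
    exact_mod_cast Nat.cast_ne_zero.mpr j.factorial_ne_zero
  have hj1 : (((j+1).factorial : Qbar)) ≠ 0 := by
    exact_mod_cast Nat.cast_ne_zero.mpr (j+1).factorial_ne_zero
  have hfac : (((j+1).factorial : Qbar)) = ((j:Qbar)+1) * (j.factorial : Qbar) := by
    rw [Nat.factorial_succ]; push_cast; ring
  rw [eval_bp, eval_bp, eval_bp, h1, h2]
  rw [hfac] at hj1 ⊢
  field_simp
  ring

lemma bp_zero_eval (x : Qbar) : (bp 0).eval x = 1 := by simp [bp]

lemma bp_succ_eval_zero (j : ℕ) : (bp (j+1)).eval 0 = 0 := by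
  rw [eval_bp]
  have : ∏ i ∈ Finset.range (j+1), ((0:Qbar) - (i:Qbar)) = 0 := by
    apply Finset.prod_eq_zero (Finset.mem_range.mpr (Nat.succ_pos j))
    simp
  rw [this, mul_zero]

variable {n : ℕ}

/-- The "matrix exponential" polynomial family `x ↦ ∑ binom(x,j) N^j`. -/
def Emat (N : Matrix (Fin n) (Fin n) Qbar) (x : Qbar) : Matrix (Fin n) (Fin n) Qbar :=
  ∑ j ∈ Finset.range (n+1), (bp j).eval x • N ^ j

lemma Emat_zero (N : Matrix (Fin n) (Fin n) Qbar) : Emat N 0 = 1 := by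
  rw [Emat, Finset.sum_range_succ']
  have h : ∀ j ∈ Finset.range n, (bp (j+1)).eval 0 • N ^ (j+1) = 0 := by
    intro j _; rw [bp_succ_eval_zero, zero_smul]
  rw [Finset.sum_congr rfl h, Finset.sum_const_zero, bp_zero_eval, pow_zero, one_smul, zero_add]

lemma Emat_shift (N : Matrix (Fin n) (Fin n) Qbar) (hN : N ^ n = 0) (x : Qbar) :
    Emat N (x + 1) = Emat N x * (1 + N) := by
  have hN1 : N ^ (n+1) = 0 := by rw [pow_succ, hN, zero_mul]
  have hmul : Emat N x * (1 + N) =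
      Emat N x + ∑ j ∈ Finset.range (n+1), (bp j).eval x • N ^ (j+1) := by
    rw [mul_add, mul_one, Emat, Finset.sum_mul]
    congr 1
    apply Finset.sum_congr rfl
    intro j _
    rw [smul_mul_assoc, pow_succ]
  rw [hmul, Emat, Emat,
    Finset.sum_range_succ' (fun j => (bp j).eval (x+1) • N ^ j) n,
    Finset.sum_range_succ' (fun j => (bp j).eval x • N ^ j) n,
    Finset.sum_range_succ (fun j => (bp j).eval x • N ^ (j+1)) n]
  have hlast : (bp n).eval x • N ^ (n+1) = 0 := by rw [hN1, smul_zero]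
  have hstep : ∀ j ∈ Finset.range n, (bp (j+1)).eval (x+1) • N ^ (j+1)
      = (bp (j+1)).eval x • N ^ (j+1) + (bp j).eval x • N ^ (j+1) := by
    intro j _; rw [pascal, add_smul]
  rw [Finset.sum_congr rfl hstep, Finset.sum_add_distrib, hlast, bp_zero_eval, bp_zero_eval]
  abel

lemma Emat_zpow (g : GL (Fin n) Qbar) (hg : IsUnipotent g) (k : ℤ) :
    Emat ((g : Matrix (Fin n) (Fin n) Qbar) - 1) (k : Qbar)
      = ((g ^ k : GL (Fin n) Qbar) : Matrix (Fin n) (Fin n) Qbar) := by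
  set N := (g : Matrix (Fin n) (Fin n) Qbar) - 1 with hNdef
  have hN : N ^ n = 0 := hg
  have hone : (1 : Matrix (Fin n) (Fin n) Qbar) + N = (g : Matrix (Fin n) (Fin n) Qbar) := by
    rw [hNdef]; abel
  have hginv : ((g : Matrix (Fin n) (Fin n) Qbar)) *
      ((g⁻¹ : GL (Fin n) Qbar) : Matrix (Fin n) (Fin n) Qbar) = 1 := by
    rw [← Units.val_mul, mul_inv_cancel, Units.val_one]
  induction k using Int.induction_on with
  | zero => simpa using Emat_zero N
  | succ k ih =>
      have hc : (((k:ℤ) + 1 : ℤ) : Qbar) = (((k:ℤ) : ℤ) : Qbar) + 1 := by push_cast; ring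
      rw [hc, Emat_shift N hN, hone, ih, ← Units.val_mul, ← zpow_add_one]
  | pred k ih =>
      have hc : ((-(k:ℤ) - 1 : ℤ) : Qbar) + 1 = ((-(k:ℤ) : ℤ) : Qbar) := by push_cast; ring
      have hstep := Emat_shift N hN ((-(k:ℤ) - 1 : ℤ) : Qbar)
      rw [hone, hc, ih] at hstep
      have h2 := congrArg
        (· * ((g⁻¹ : GL (Fin n) Qbar) : Matrix (Fin n) (Fin n) Qbar)) hstep.symm
      rw [mul_assoc, hginv, mul_one, ← Units.val_mul, ← zpow_sub_one] at h2
      exact h2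

lemma det_eq_one (g : GL (Fin n) Qbar) (hg : IsUnipotent g) :
    ((g : Matrix (Fin n) (Fin n) Qbar)).det = 1 := by
  set N := (g : Matrix (Fin n) (Fin n) Qbar) - 1 with hNdef
  have hnil : IsNilpotent N := ⟨n, hg⟩
  have hcp : N.charpoly = Polynomial.X ^ (Fintype.card (Fin n)) := by
    have h := Matrix.isNilpotent_charpoly_sub_pow_of_isNilpotent hnil
    have h0 := h.eq_zero
    rwa [sub_eq_zero] at h0
  have heval : (N.charpoly).eval (-1 : Qbar) = ((-1 : Qbar) • 1 - N).det := by
    rw [Matrix.charpoly]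
    rw [show Polynomial.eval (-1 : Qbar) N.charmatrix.det
        = (Polynomial.evalRingHom (-1 : Qbar)) N.charmatrix.det from rfl, RingHom.map_det]
    congr 1
    ext i j
    by_cases hij : i = j
    · subst hij
      simp [Matrix.charmatrix_apply_eq, Matrix.smul_apply, Matrix.one_apply]
    · simp [Matrix.charmatrix_apply_ne _ _ _ hij, Matrix.smul_apply, Matrix.one_apply_ne hij]
  have h2 : ((-1 : Qbar) • 1 - N).det
      = (-1 : Qbar) ^ n * ((g : Matrix (Fin n) (Fin n) Qbar)).det := by
    have : (-1 : Qbar) • (1 : Matrix (Fin n) (Fin n) Qbar) - N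
        = (-1 : Qbar) • ((g : Matrix (Fin n) (Fin n) Qbar)) := by
      rw [hNdef]; module
    rw [this, Matrix.det_smul]
    simp
  have h3 : (N.charpoly).eval (-1 : Qbar) = (-1 : Qbar) ^ n := by
    rw [hcp]; simp
  have h4 : (-1 : Qbar) ^ n * ((g : Matrix (Fin n) (Fin n) Qbar)).det = (-1 : Qbar) ^ n := by
    rw [← h2, ← heval, h3]
  have hne : ((-1 : Qbar) ^ n) ≠ 0 := pow_ne_zero _ (by norm_num)
  field_simp at h4
  exact h4

/-- The matrix of polynomials interpolating the powers of `1 + N`. -/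
def matP (N : Matrix (Fin n) (Fin n) Qbar) : Matrix (Fin n) (Fin n) (Polynomial Qbar) :=
  ∑ j ∈ Finset.range (n+1), bp j • (N.map Polynomial.C) ^ j

def coordP (N : Matrix (Fin n) (Fin n) Qbar) : glIdx n → Polynomial Qbar :=
  Sum.elim (fun p => matP N p.1 p.2) (fun _ => 1)

/-- Restriction of a polynomial function on affine space to the interpolating curve. -/
def Pf (N : Matrix (Fin n) (Fin n) Qbar) (f : MvPolynomial (glIdx n) Qbar) : Polynomial Qbar :=
  MvPolynomial.aeval (coordP N) f

lemma eval_coordP (N : Matrix (Fin n) (Fin n) Qbar) (x : Qbar) (s : glIdx n) :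
    (coordP N s).eval x = Sum.elim (fun p => Emat N x p.1 p.2) (fun _ => (1:Qbar)) s := by
  cases s with
  | inr u => simp [coordP]
  | inl p =>
      simp only [coordP, Sum.elim_inl, matP, Emat]
      rw [Matrix.sum_apply, Matrix.sum_apply]
      rw [Polynomial.eval_finset_sum]
      apply Finset.sum_congr rfl
      intro j _
      have hmap : (N.map Polynomial.C) ^ j = (N ^ j).map Polynomial.C := by
        rw [← RingHom.mapMatrix_apply, ← RingHom.mapMatrix_apply, ← map_pow]
      rw [hmap]
      simp [Matrix.smul_apply, Matrix.map_apply, Polynomial.smul_eq_C_mul]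

lemma eval_Pf (N : Matrix (Fin n) (Fin n) Qbar) (f : MvPolynomial (glIdx n) Qbar) (x : Qbar) :
    (Pf N f).eval x
      = MvPolynomial.eval (Sum.elim (fun p => Emat N x p.1 p.2) (fun _ => (1:Qbar))) f := by
  have hcomp : (Polynomial.aeval x : Polynomial Qbar →ₐ[Qbar] Qbar).comp
      (MvPolynomial.aeval (coordP N))
      = MvPolynomial.aeval (fun s => (Polynomial.aeval x) (coordP N s)) :=
    MvPolynomial.comp_aeval _ _
  have h := congrArg (fun φ => φ f) hcomp
  simp only [AlgHom.comp_apply] at h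
  have h1 : (Polynomial.aeval x) (MvPolynomial.aeval (coordP N) f) = (Pf N f).eval x := by
    rw [Pf, Polynomial.coe_aeval_eq_eval]
  have h2 : (MvPolynomial.aeval (fun s => (Polynomial.aeval x) (coordP N s))) f
      = MvPolynomial.eval (Sum.elim (fun p => Emat N x p.1 p.2) (fun _ => (1:Qbar))) f := by
    have : (fun s => (Polynomial.aeval x) (coordP N s))
        = Sum.elim (fun p => Emat N x p.1 p.2) (fun _ => (1:Qbar)) := by
      funext s
      rw [Polynomial.coe_aeval_eq_eval, eval_coordP]
    rw [this, ← MvPolynomial.coe_aeval_eq_eval]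
    rfl
  rw [← h1, h, h2]

lemma poly_zero_of_int_roots (p : Polynomial Qbar) (h : ∀ k : ℤ, p.eval ((k:ℤ) : Qbar) = 0) :
    p = 0 := by
  apply p.eq_zero_of_infinite_isRoot
  have hinj : Function.Injective (fun k : ℤ => (k : Qbar)) := fun a b hab => by
    simp only at hab
    exact_mod_cast hab
  apply (Set.infinite_range_of_injective hinj).mono
  rintro _ ⟨k, rfl⟩
  exact h k

end Stmt8Aux

/-- The Zariski closure of the cyclic subgroup generated by `g`. -/
def cyclicClosure {n : ℕ} (g : GL (Fin n) Qbar) : Set (glIdx n → Qbar) :=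
  zariskiClosure (glPoint ''
    ((Subgroup.closure {g} : Subgroup (GL (Fin n) Qbar)) : Set (GL (Fin n) Qbar)))

/-- **Irreducibility for a unipotent element**: if `g ∈ GL_n(ℚ̄)` is unipotent, then
`Zcl(⟨g⟩)` is an irreducible algebraic set: it is nonempty and is not the union of two
algebraic proper subsets. -/
theorem stmt8 (n : ℕ) (g : GL (Fin n) Qbar) (hg : IsUnipotent g) :
    (cyclicClosure g).Nonempty ∧
    ∀ X₁ X₂ : Set (glIdx n → Qbar), IsAlgebraicSet X₁ → IsAlgebraicSet X₂ →
      cyclicClosure g = X₁ ∪ X₂ → X₁ = cyclicClosure g ∨ X₂ = cyclicClosure g := by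
  classical
  set N : Matrix (Fin n) (Fin n) Qbar := (g : Matrix (Fin n) (Fin n) Qbar) - 1 with hNdef
  set Y : Set (glIdx n → Qbar) := glPoint ''
    ((Subgroup.closure {g} : Subgroup (GL (Fin n) Qbar)) : Set (GL (Fin n) Qbar)) with hYdef
  have hYsub : Y ⊆ cyclicClosure g := by
    intro a ha f hf
    exact hf a ha
  have hZmin : ∀ I : Set (MvPolynomial (glIdx n) Qbar),
      Y ⊆ zeroSet I → cyclicClosure g ⊆ zeroSet I := by
    intro I hYI a ha f hf
    exact ha f (fun b hb => hYI hb f hf)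
  have hpt : ∀ k : ℤ, glPoint (g ^ k)
      = Sum.elim (fun p => Stmt8Aux.Emat N ((k:ℤ) : Qbar) p.1 p.2) (fun _ => (1:Qbar)) := by
    intro k
    have hdet : ((g ^ k : GL (Fin n) Qbar) : Matrix (Fin n) (Fin n) Qbar).det = 1 := by
      have hg1 : (Units.map (Matrix.detMonoidHom) g : Qbarˣ) = 1 := by
        apply Units.ext
        have h := Stmt8Aux.det_eq_one g hg
        simpa [Matrix.detMonoidHom] using h
      have hD : (Units.map (Matrix.detMonoidHom) (g ^ k) : Qbarˣ)
          = (Units.map (Matrix.detMonoidHom) g) ^ k := map_zpow _ g k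
      have : (Units.map (Matrix.detMonoidHom) (g ^ k) : Qbarˣ) = 1 := by
        rw [hD, hg1, one_zpow]
      have hval := congrArg (Units.val) this
      rw [Units.coe_map, Units.val_one] at hval
      exact hval
    funext s
    cases s with
    | inl p =>
        simp only [glPoint, Sum.elim_inl]
        rw [Stmt8Aux.Emat_zpow g hg k]
    | inr u =>
        simp only [glPoint, Sum.elim_inr]
        rw [hdet, inv_one]
  have evalPK : ∀ (f : MvPolynomial (glIdx n) Qbar) (k : ℤ),
      (Stmt8Aux.Pf N f).eval ((k:ℤ) : Qbar) = MvPolynomial.eval (glPoint (g ^ k)) f := by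
    intro f k
    rw [Stmt8Aux.eval_Pf, hpt k]
  constructor
  · exact ⟨glPoint 1, hYsub ⟨1, Subgroup.one_mem _, rfl⟩⟩
  · intro X₁ X₂ hA₁ hA₂ hU
    obtain ⟨I₁, rfl⟩ := hA₁
    obtain ⟨I₂, rfl⟩ := hA₂
    by_cases h₁ : Y ⊆ zeroSet I₁
    · left
      apply Set.Subset.antisymm
      · rw [hU]; exact Set.subset_union_left
      · exact hZmin I₁ h₁
    by_cases h₂ : Y ⊆ zeroSet I₂
    · right
      apply Set.Subset.antisymm
      · rw [hU]; exact Set.subset_union_right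
      · exact hZmin I₂ h₂
    exfalso
    obtain ⟨y₁, hy₁Y, hy₁⟩ := Set.not_subset.mp h₁
    obtain ⟨y₂, hy₂Y, hy₂⟩ := Set.not_subset.mp h₂
    obtain ⟨u₁, hu₁, rfl⟩ := hy₁Y
    obtain ⟨u₂, hu₂, rfl⟩ := hy₂Y
    obtain ⟨k₁, rfl⟩ := Subgroup.mem_closure_singleton.mp hu₁
    obtain ⟨k₂, rfl⟩ := Subgroup.mem_closure_singleton.mp hu₂
    rw [zeroSet, Set.mem_setOf_eq, not_forall] at hy₁ hy₂
    obtain ⟨f₁, hf₁⟩ := hy₁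
    obtain ⟨f₂, hf₂⟩ := hy₂
    rw [Classical.not_imp] at hf₁ hf₂
    obtain ⟨hf₁I, hf₁ne⟩ := hf₁
    obtain ⟨hf₂I, hf₂ne⟩ := hf₂
    have hP₁ : Stmt8Aux.Pf N f₁ ≠ 0 := by
      intro h0
      apply hf₁ne
      rw [← evalPK f₁ k₁, h0, Polynomial.eval_zero]
    have hP₂ : Stmt8Aux.Pf N f₂ ≠ 0 := by
      intro h0
      apply hf₂ne
      rw [← evalPK f₂ k₂, h0, Polynomial.eval_zero]
    have hprod : Stmt8Aux.Pf N f₁ * Stmt8Aux.Pf N f₂ = 0 := by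
      apply Stmt8Aux.poly_zero_of_int_roots
      intro k
      rw [Polynomial.eval_mul, evalPK, evalPK]
      have hmem : glPoint (g ^ k) ∈ zeroSet I₁ ∪ zeroSet I₂ := by
        rw [← hU]
        exact hYsub ⟨g ^ k, Subgroup.mem_closure_singleton.mpr ⟨k, rfl⟩, rfl⟩
      cases hmem with
      | inl h => rw [h f₁ hf₁I, zero_mul]
      | inr h => rw [h f₂ hf₂I, mul_zero]
    exact (mul_ne_zero hP₁ hP₂) hprod
end
end

section
/- Let n ≥ 1 and let g ∈ GL_n(ℚ) be an invertible matrix all of whose entries have height at most h. Then every entry of the inverse matrix g⁻¹ has height at most h^{n³+n²}·n!. -/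
noncomputable section

open scoped MatrixGroups

open Matrix Finset in
lemma det_abs_le_of_row_bound {n : ℕ} (A : Matrix (Fin n) (Fin n) ℚ) (B : Fin n → ℚ)
    (hA : ∀ i j, |A i j| ≤ B i) :
    |A.det| ≤ n.factorial * ∏ i, B i := by
  rw [Matrix.det_apply]
  calc |∑ σ : Equiv.Perm (Fin n), Equiv.Perm.sign σ • ∏ i, A (σ i) i|
      ≤ ∑ σ : Equiv.Perm (Fin n), |Equiv.Perm.sign σ • ∏ i, A (σ i) i| :=
        Finset.abs_sum_le_sum_abs _ _
    _ ≤ ∑ _σ : Equiv.Perm (Fin n), ∏ i, B i := by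
        refine Finset.sum_le_sum fun σ _ => ?_
        have h1 : |Equiv.Perm.sign σ • ∏ i, A (σ i) i| = |∏ i, A (σ i) i| := by
          rcases Int.units_eq_one_or (Equiv.Perm.sign σ) with hs | hs <;>
            simp [hs, Units.smul_def]
        rw [h1, Finset.abs_prod]
        calc ∏ i, |A (σ i) i| ≤ ∏ i, B (σ i) :=
              Finset.prod_le_prod (fun i _ => abs_nonneg _) (fun i _ => hA (σ i) i)
          _ = ∏ i, B i := Equiv.prod_comp σ B
    _ = n.factorial * ∏ i, B i := by
        rw [Finset.sum_const, Finset.card_univ, Fintype.card_perm, Fintype.card_fin,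
          nsmul_eq_mul]

lemma ratHeight_le_of_eq_div (q : ℚ) (a b : ℤ) (hb : b ≠ 0) (hq : q = (a : ℚ) / b) :
    ratHeight q ≤ max a.natAbs b.natAbs := by
  have hnum : q.num ∣ a := by
    rw [hq, ← Rat.divInt_eq_div]; exact Rat.num_dvd a hb
  have hden : (q.den : ℤ) ∣ b := by
    rw [hq, ← Rat.divInt_eq_div]; exact Rat.den_dvd a b
  unfold ratHeight
  apply max_le
  · rcases eq_or_ne a 0 with rfl | ha
    · have : q = 0 := by simp [hq]
      simp [this]
    · exact le_max_of_le_left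
        (Nat.le_of_dvd (Int.natAbs_pos.mpr ha) (Int.natAbs_dvd_natAbs.mpr hnum))
  · refine le_max_of_le_right ?_
    have : q.den ∣ b.natAbs := by
      have := Int.natAbs_dvd_natAbs.mpr hden
      simpa using this
    exact Nat.le_of_dvd (Int.natAbs_pos.mpr hb) this

/-- **Height of the inverse matrix**: if `g ∈ GL_n(ℚ)` has entries of height at most `h`,
then every entry of `g⁻¹` has height at most `h^(n³+n²)·n!`. -/
theorem stmt13 (n : ℕ) (hn : 1 ≤ n) (h : ℕ) (g : GL (Fin n) ℚ)
    (hg : ∀ i j, ratHeight ((g : Matrix (Fin n) (Fin n) ℚ) i j) ≤ h) :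
    ∀ i j, ratHeight (((g⁻¹ : GL (Fin n) ℚ) : Matrix (Fin n) (Fin n) ℚ) i j) ≤
      h ^ (n ^ 3 + n ^ 2) * n.factorial := by
  intro i j
  set gm : Matrix (Fin n) (Fin n) ℚ := (g : Matrix (Fin n) (Fin n) ℚ) with hgm
  have i0 : Fin n := ⟨0, hn⟩
  -- `h ≥ 1`
  have hh1 : 1 ≤ h := le_trans (le_trans (gm i0 i0).pos (le_max_right _ _)) (hg i0 i0)
  -- denominators and entries are at most `h`
  have hden_le : ∀ i j, (gm i j).den ≤ h := fun i j =>
    le_trans (le_max_right _ _) (hg i j)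
  have habs_le : ∀ i j, |gm i j| ≤ (h : ℚ) := by
    intro i j
    have h1 : |gm i j| ≤ |((gm i j).num : ℚ)| := by
      conv_lhs => rw [← Rat.num_div_den (gm i j)]
      rw [abs_div, abs_of_nonneg (by positivity : (0:ℚ) ≤ ((gm i j).den : ℚ))]
      apply div_le_self (abs_nonneg _)
      exact_mod_cast (gm i j).pos
    refine h1.trans ?_
    rw [← Int.cast_abs, Int.abs_eq_natAbs]
    exact_mod_cast le_trans (le_max_left _ _) (hg i j)
  -- the common denominator
  set D : ℕ := ∏ i : Fin n, ∏ j : Fin n, (gm i j).den with hD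
  have hD0 : 0 < D := Finset.prod_pos fun i _ => Finset.prod_pos fun j _ => (gm i j).pos
  have hDle : D ≤ h ^ (n * n) := by
    calc D ≤ ∏ _i : Fin n, ∏ _j : Fin n, h :=
          Finset.prod_le_prod' fun i _ => Finset.prod_le_prod' fun j _ => hden_le i j
      _ = h ^ (n * n) := by
          simp [Finset.prod_const, Finset.card_univ, ← pow_mul]
  -- the integer matrix `N`, whose rational avatar is `D • g`
  set N : Matrix (Fin n) (Fin n) ℤ :=
    Matrix.of fun i j => ((D / (gm i j).den : ℕ) : ℤ) * (gm i j).num with hNdef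
  set Nq : Matrix (Fin n) (Fin n) ℚ := N.map ((↑) : ℤ → ℚ) with hNq
  have hDpow : (D : ℚ) ^ n = (D : ℚ) * (D : ℚ) ^ (n - 1) := by
    rw [← pow_succ']
    congr 1
    omega
  have hN : ∀ i j, Nq i j = (D : ℚ) * gm i j := by
    intro i j
    have hdvd : (gm i j).den ∣ D :=
      dvd_trans (Finset.dvd_prod_of_mem (fun j' => (gm i j').den) (Finset.mem_univ j))
        (Finset.dvd_prod_of_mem (fun i' => ∏ j', (gm i' j').den) (Finset.mem_univ i))
    have hden0 : ((gm i j).den : ℚ) ≠ 0 := by exact_mod_cast (gm i j).den_nz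
    show ((((D / (gm i j).den : ℕ) : ℤ) * (gm i j).num : ℤ) : ℚ) = (D : ℚ) * gm i j
    rw [Int.cast_mul, Int.cast_natCast, Nat.cast_div hdvd hden0, div_mul_eq_mul_div,
      mul_div_assoc, Rat.num_div_den]
  have hNsmul : Nq = (D : ℚ) • gm := by
    ext i' j'
    simp [hN i' j', Matrix.smul_apply]
  have hNq_abs : ∀ i' j', |Nq i' j'| ≤ (D : ℚ) * h := by
    intro i' j'
    rw [hN, abs_mul, abs_of_nonneg (by positivity : (0:ℚ) ≤ (D:ℚ))]
    exact mul_le_mul_of_nonneg_left (habs_le i' j') (by positivity)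
  -- determinant facts
  have hdet0 : gm.det ≠ 0 := by
    have : IsUnit gm := ⟨g, rfl⟩
    exact ((Matrix.isUnit_iff_isUnit_det gm).mp this).ne_zero
  have hdetNq : Nq.det = (D : ℚ) ^ n * gm.det := by
    rw [hNsmul, Matrix.det_smul, Fintype.card_fin]

  have hadjNq : ∀ i' j', Nq.adjugate i' j' = (D : ℚ) ^ (n - 1) * gm.adjugate i' j' := by
    intro i' j'
    rw [hNsmul, Matrix.adjugate_smul, Fintype.card_fin, Matrix.smul_apply, smul_eq_mul]
  -- cast compatibilities
  have hdet_cast : ((N.det : ℤ) : ℚ) = Nq.det := by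
    have := RingHom.map_det (Int.castRingHom ℚ) N
    simpa [RingHom.mapMatrix_apply, hNq] using this
  have hadj_cast : ∀ i' j', ((N.adjugate i' j' : ℤ) : ℚ) = Nq.adjugate i' j' := by
    intro i' j'
    have h2 : N.adjugate.map ((↑) : ℤ → ℚ) = Nq.adjugate := by
      have := (Int.castRingHom ℚ).map_adjugate N
      simpa [RingHom.mapMatrix_apply, hNq] using this
    rw [← h2, Matrix.map_apply]
  -- the numerator and denominator
  set a : ℤ := (D : ℤ) * N.adjugate i j with ha
  set b : ℤ := N.det with hb
  have hbq : (b : ℚ) = (D : ℚ) ^ n * gm.det := by rw [hb]; rw [hdet_cast, hdetNq]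
  have hb0 : b ≠ 0 := by
    intro hb'
    rw [hb'] at hbq
    have : (D : ℚ) ^ n * gm.det ≠ 0 := by
      apply mul_ne_zero _ hdet0
      positivity
    exact this hbq.symm
  -- the entry of the inverse equals a / b
  have hkey : ((g⁻¹ : GL (Fin n) ℚ) : Matrix (Fin n) (Fin n) ℚ) i j = (a : ℚ) / b := by
    have hcoe : ((g⁻¹ : GL (Fin n) ℚ) : Matrix (Fin n) (Fin n) ℚ) = gm⁻¹ :=
      Matrix.coe_units_inv g
    rw [hcoe, Matrix.inv_def, Matrix.smul_apply, smul_eq_mul,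
      Ring.inverse_eq_inv']
    have haq : (a : ℚ) = (D : ℚ) ^ n * gm.adjugate i j := by
      rw [ha, Int.cast_mul, Int.cast_natCast, hadj_cast, hadjNq, hDpow]
      ring
    rw [hbq, haq, mul_div_mul_left _ _ (by positivity : ((D:ℚ))^n ≠ 0)]
    rw [div_eq_inv_mul]
  -- bounds on |a| and |b|
  have hbound_det : |Nq.det| ≤ n.factorial * ((D : ℚ) * h) ^ n := by
    have := det_abs_le_of_row_bound Nq (fun _ => (D : ℚ) * h) (fun i' j' => hNq_abs i' j')
    simpa [Finset.prod_const, Finset.card_univ] using this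
  have hbound_adj : |Nq.adjugate i j| ≤ n.factorial * ((D : ℚ) * h) ^ (n - 1) := by
    rw [Matrix.adjugate_apply]
    have hupd : ∀ k l, |(Nq.updateRow j (Pi.single i 1)) k l| ≤
        (if k = j then 1 else (D : ℚ) * h) := by
      intro k l
      by_cases hk : k = j
      · subst hk
        rw [Matrix.updateRow_self, if_pos rfl, Pi.single_apply]
        split <;> norm_num
      · rw [Matrix.updateRow_ne hk, if_neg hk]
        exact hNq_abs k l
    have := det_abs_le_of_row_bound _ _ hupd
    refine this.trans ?_
    have hprod : (∏ k : Fin n, (if k = j then 1 else (D : ℚ) * h)) = ((D : ℚ) * h) ^ (n - 1) := by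
      rw [← Finset.mul_prod_erase Finset.univ _ (Finset.mem_univ j), if_pos rfl, one_mul]
      rw [Finset.prod_congr rfl (fun k hk => if_neg (Finset.ne_of_mem_erase hk)),
        Finset.prod_const, Finset.card_erase_of_mem (Finset.mem_univ j),
        Finset.card_univ, Fintype.card_fin]
    rw [hprod]
  have haA : a.natAbs ≤ n.factorial * (D ^ n * h ^ (n - 1)) := by
    have : ((a.natAbs : ℕ) : ℚ) ≤ ((n.factorial * (D ^ n * h ^ (n - 1)) : ℕ) : ℚ) := by
      rw [Nat.cast_natAbs, Int.cast_abs, Int.cast_mul, Int.cast_natCast, abs_mul,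
        abs_of_nonneg (by positivity : (0:ℚ) ≤ (D:ℚ)), hadj_cast]
      calc (D : ℚ) * |Nq.adjugate i j| ≤ (D : ℚ) * (n.factorial * ((D : ℚ) * h) ^ (n - 1)) :=
            mul_le_mul_of_nonneg_left hbound_adj (by positivity)
        _ = (n.factorial : ℚ) * ((D:ℚ) ^ n * (h:ℚ) ^ (n - 1)) := by
            rw [mul_pow, hDpow]; ring
        _ = _ := by push_cast; ring
    exact_mod_cast this
  have hbA : b.natAbs ≤ n.factorial * (D ^ n * h ^ n) := by
    have : ((b.natAbs : ℕ) : ℚ) ≤ ((n.factorial * (D ^ n * h ^ n) : ℕ) : ℚ) := by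
      have hdet_cast' : ((N.det : ℤ) : ℚ) = Nq.det := hdet_cast
      rw [Nat.cast_natAbs, Int.cast_abs, hdet_cast']
      refine hbound_det.trans ?_
      apply le_of_eq
      push_cast
      ring
    exact_mod_cast this
  -- put it together
  have hmain := ratHeight_le_of_eq_div _ a b hb0 hkey
  refine hmain.trans ?_
  have hDn : D ^ n ≤ h ^ (n ^ 3) := by
    calc D ^ n ≤ (h ^ (n * n)) ^ n := Nat.pow_le_pow_left hDle n
      _ = h ^ (n ^ 3) := by rw [← pow_mul]; ring_nf
  have hfinal : ∀ m, m ≤ n ^ 2 → n.factorial * (D ^ n * h ^ m) ≤ h ^ (n ^ 3 + n ^ 2) * n.factorial := by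
    intro m hm
    rw [mul_comm]
    apply Nat.mul_le_mul_right
    calc D ^ n * h ^ m ≤ h ^ (n ^ 3) * h ^ (n ^ 2) :=
          Nat.mul_le_mul hDn (Nat.pow_le_pow_right hh1 hm)
      _ = h ^ (n ^ 3 + n ^ 2) := by rw [← pow_add]
  have hnsq : n ≤ n ^ 2 := by nlinarith
  apply max_le
  · exact haA.trans (hfinal _ (le_trans (Nat.sub_le n 1) hnsq))
  · exact hbA.trans (hfinal _ hnsq)
end
end

section
/- Let n ≥ 1 and let f be a nonzero polynomial in the n² variables x_{ij} (1 ≤ i,j ≤ n) with coefficients in ℚ̄. If f vanishes at every n×n matrix over ℚ̄ of determinant 1 (i.e. f(M) = 0 for every M ∈ SL_n(ℚ̄)), then the total degree of f is at least n. -/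
noncomputable section

private lemma aux_natDegree_le {σ R : Type*} [CommRing R] (f : MvPolynomial σ R) (A : σ → R) :
    (MvPolynomial.eval₂ Polynomial.C (fun i => Polynomial.C (A i) * Polynomial.X) f).natDegree
      ≤ f.totalDegree := by
  rw [MvPolynomial.eval₂_eq]
  apply Polynomial.natDegree_sum_le_of_forall_le
  intro d hd
  refine le_trans Polynomial.natDegree_mul_le ?_
  rw [Polynomial.natDegree_C, zero_add]
  refine le_trans (Polynomial.natDegree_prod_le _ _) ?_
  refine le_trans (Finset.sum_le_sum (fun i _ => ?_)) (MvPolynomial.le_totalDegree hd)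
  refine le_trans Polynomial.natDegree_pow_le ?_
  have h1 : (Polynomial.C (A i) * Polynomial.X).natDegree ≤ 1 := by
    refine le_trans Polynomial.natDegree_mul_le ?_
    simp [Polynomial.natDegree_X_le]
  calc d i * (Polynomial.C (A i) * Polynomial.X).natDegree ≤ d i * 1 :=
        Nat.mul_le_mul_left _ h1
    _ = d i := by ring

/-- **Polynomials vanishing on `SL_n`**: if a nonzero polynomial `f` in the `n²` matrix
variables vanishes at every `n×n` matrix over `ℚ̄` of determinant `1`, then its total
degree is at least `n`. -/
theorem stmt16 (n : ℕ) (hn : 1 ≤ n) (f : MvPolynomial (Fin n × Fin n) Qbar)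
    (hf : f ≠ 0)
    (hvan : ∀ M : Matrix (Fin n) (Fin n) Qbar, M.det = 1 →
      MvPolynomial.eval (fun p => M p.1 p.2) f = 0) :
    n ≤ f.totalDegree := by
  classical
  by_contra hlt
  push_neg at hlt
  have hn0 : 0 < n := hn
  -- Step 1: f vanishes at every matrix with nonzero determinant
  have key : ∀ A : Matrix (Fin n) (Fin n) Qbar, A.det ≠ 0 →
      MvPolynomial.eval (fun p => A p.1 p.2) f = 0 := by
    intro A hA
    set p : Polynomial Qbar :=
      MvPolynomial.eval₂ Polynomial.C (fun q => Polynomial.C (A q.1 q.2) * Polynomial.X) f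
      with hpdef
    have hev : ∀ t : Qbar, p.eval t = MvPolynomial.eval (fun q => A q.1 q.2 * t) f := by
      intro t
      have h := MvPolynomial.eval₂_comp_left (Polynomial.evalRingHom t) Polynomial.C
        (fun q : Fin n × Fin n => Polynomial.C (A q.1 q.2) * Polynomial.X) f
      have hc : (Polynomial.evalRingHom t).comp Polynomial.C = RingHom.id Qbar := by
        ext a; simp
      have hg : (⇑(Polynomial.evalRingHom t) ∘ fun q : Fin n × Fin n =>
          Polynomial.C (A q.1 q.2) * Polynomial.X) = fun q => A q.1 q.2 * t := by
        funext q; simp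
      rw [hc, hg, MvPolynomial.eval₂_id] at h
      exact h
    have hdeg : p.natDegree ≤ f.totalDegree := aux_natDegree_le f _
    -- the distinct n-th roots of (det A)⁻¹
    have : NeZero ((n : Qbar)) := ⟨Nat.cast_ne_zero.mpr (by omega)⟩
    obtain ⟨ζ, hζ⟩ := HasEnoughRootsOfUnity.exists_primitiveRoot Qbar n
    have hb : (A.det)⁻¹ ≠ 0 := inv_ne_zero hA
    have hnodup := hζ.nthRoots_nodup hb
    have hcard : Multiset.card (Polynomial.nthRoots n (A.det)⁻¹) = n := by
      rw [hζ.card_nthRoots, if_pos (IsAlgClosed.exists_pow_nat_eq _ hn0)]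
    have hp0 : p = 0 := by
      apply Polynomial.eq_zero_of_natDegree_lt_card_of_eval_eq_zero' p
        (Polynomial.nthRoots n (A.det)⁻¹).toFinset
      · intro t ht
        rw [Multiset.mem_toFinset, Polynomial.mem_nthRoots hn0] at ht
        rw [hev]
        have hfun : (fun q : Fin n × Fin n => A q.1 q.2 * t)
            = fun q : Fin n × Fin n => (t • A) q.1 q.2 := by
          funext q; simp [Matrix.smul_apply, mul_comm]
        rw [hfun]
        apply hvan
        rw [Matrix.det_smul, Fintype.card_fin, ht, inv_mul_cancel₀ hA]
      · rw [Multiset.toFinset_card_of_nodup hnodup, hcard]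
        exact lt_of_le_of_lt hdeg hlt
    have := hev 1
    rw [hp0] at this
    simpa using this.symm
  -- Step 2: therefore det * f = 0 as a polynomial, contradiction
  have hdf : (Matrix.mvPolynomialX (Fin n) (Fin n) Qbar).det * f = 0 := by
    apply MvPolynomial.funext
    intro x
    rw [map_zero, map_mul]
    set A : Matrix (Fin n) (Fin n) Qbar := Matrix.of fun i j => x (i, j) with hA
    have hx : x = fun q : Fin n × Fin n => A q.1 q.2 := by funext q; rfl
    have hdet : MvPolynomial.eval x (Matrix.mvPolynomialX (Fin n) (Fin n) Qbar).det = A.det := by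
      rw [hx, RingHom.map_det, Matrix.mvPolynomialX_mapMatrix_eval]
    rcases eq_or_ne A.det 0 with h0 | h0
    · rw [hdet, h0, zero_mul]
    · rw [hx, key A h0, mul_zero]
  rcases mul_eq_zero.mp hdf with h | h
  · exact Matrix.det_mvPolynomialX_ne_zero (Fin n) Qbar h
  · exact hf h
end
end

section
/- For every p ≥ 1, every finite subgroup of GL_p(ℚ) has order at most (2p)!. -/
noncomputable section

open scoped MatrixGroups Kronecker
open Polynomial Matrix

namespace Stmt18Aux

variable {ι : Type*} [Fintype ι] [DecidableEq ι]

lemma eval_charpoly_eq (M : Matrix ι ι ℂ) (μ : ℂ) :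
    M.charpoly.eval μ = (μ • (1 : Matrix ι ι ℂ) - M).det := by
  have h : (Polynomial.evalRingHom μ).mapMatrix (charmatrix M)
      = μ • (1 : Matrix ι ι ℂ) - M := by
    ext i j
    by_cases hij : i = j
    · subst hij
      simp [charmatrix_apply_eq, Matrix.sub_apply, Matrix.smul_apply, Matrix.one_apply]
    · simp [charmatrix_apply_ne _ _ _ hij, Matrix.sub_apply, Matrix.smul_apply,
        Matrix.one_apply, hij]
  have := (Polynomial.evalRingHom μ).map_det (charmatrix M)
  rw [h] at this
  simpa [Matrix.charpoly] using this

lemma eval_eq_zero_of_root_charpoly (M : Matrix ι ι ℂ) (f : ℂ[X])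
    (hf : Polynomial.aeval M f = 0) {μ : ℂ} (hμ : M.charpoly.IsRoot μ) :
    f.eval μ = 0 := by
  have hdet : (μ • (1 : Matrix ι ι ℂ) - M).det = 0 := by
    rw [← eval_charpoly_eq]; exact hμ
  obtain ⟨v, hv0, hv⟩ := Matrix.exists_mulVec_eq_zero_iff.2 hdet
  have hMv : M *ᵥ v = μ • v := by
    rw [Matrix.sub_mulVec, Matrix.smul_mulVec, Matrix.one_mulVec, sub_eq_zero] at hv
    exact hv.symm
  have hpow : ∀ r : ℕ, (M ^ r) *ᵥ v = μ ^ r • v := by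
    intro r
    induction r with
    | zero => simp
    | succ r ih =>
        rw [pow_succ, ← Matrix.mulVec_mulVec, hMv, Matrix.mulVec_smul, ih,
          smul_smul, pow_succ, mul_comm]
  have key : ∀ g : ℂ[X], (Polynomial.aeval M g) *ᵥ v = g.eval μ • v := by
    intro g
    induction g using Polynomial.induction_on' with
    | add p q hp hq => rw [map_add, Matrix.add_mulVec, hp, hq, eval_add, add_smul]
    | monomial k c =>
        rw [Polynomial.aeval_monomial, eval_monomial, ← Algebra.smul_def,
          Matrix.smul_mulVec, hpow, smul_smul]
  have h0 : (0 : Matrix ι ι ℂ) *ᵥ v = f.eval μ • v := by rw [← hf]; exact key f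
  rw [Matrix.zero_mulVec] at h0
  obtain ⟨i, hi⟩ := Function.ne_iff.mp hv0
  have := congrFun h0 i
  simp only [Pi.zero_apply, Pi.smul_apply, smul_eq_mul] at this
  rcases mul_eq_zero.mp this.symm with h | h
  · exact h
  · exact absurd h hi

lemma trace_eq_sum_roots_charpoly [Nonempty ι] (M : Matrix ι ι ℂ) :
    M.trace = M.charpoly.roots.sum := by
  have hnd : M.charpoly.natDegree = Fintype.card ι := charpoly_natDegree_eq_dim M
  have hpos : 0 < M.charpoly.natDegree := by rw [hnd]; exact Fintype.card_pos
  rw [trace_eq_neg_charpoly_coeff, ← hnd, ← Polynomial.nextCoeff_of_natDegree_pos hpos,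
    (IsAlgClosed.splits _).nextCoeff_eq_neg_sum_roots_of_monic (M.charpoly_monic), neg_neg]

lemma multiset_sum_eq_of_mem_pair {c : ℂ} (R : Multiset ℂ)
    (h : ∀ μ ∈ R, μ = 0 ∨ μ = c) : ∃ k : ℕ, R.sum = (k : ℂ) * c := by
  induction R using Multiset.induction_on with
  | empty => exact ⟨0, by simp⟩
  | cons a s ih =>
      obtain ⟨k, hk⟩ := ih (fun μ hμ => h μ (Multiset.mem_cons_of_mem hμ))
      rcases h a (Multiset.mem_cons_self a s) with ha | ha
      · exact ⟨k, by simp [ha, hk]⟩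
      · exact ⟨k + 1, by simp [ha, hk]; push_cast; ring⟩

lemma exists_nat_trace_eq [Nonempty ι] {N : ℕ}
    (S : Matrix ι ι ℂ) (hS : S * S = (N : ℂ) • S) :
    ∃ k : ℕ, S.trace = (k : ℂ) * N := by
  have haev : Polynomial.aeval S (X ^ 2 - C (N:ℂ) * X : ℂ[X]) = 0 := by
    have : Polynomial.aeval S (X ^ 2 - C (N:ℂ) * X : ℂ[X])
        = S * S - (N:ℂ) • S := by
      simp [pow_two, Algebra.smul_def]
    rw [this, hS, sub_self]
  have hroots : ∀ μ ∈ S.charpoly.roots, μ = 0 ∨ μ = (N:ℂ) := by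
    intro μ hμ
    have h := eval_eq_zero_of_root_charpoly S _ haev (isRoot_of_mem_roots hμ)
    have h2 : μ * (μ - N) = 0 := by
      simp only [eval_sub, eval_pow, eval_mul, eval_C, eval_X] at h
      linear_combination h
    rcases mul_eq_zero.mp h2 with h' | h'
    · exact Or.inl h'
    · exact Or.inr (sub_eq_zero.mp h')
  obtain ⟨k, hk⟩ := multiset_sum_eq_of_mem_pair _ hroots
  exact ⟨k, by rw [trace_eq_sum_roots_charpoly, hk]⟩



lemma trace_mapMatrix {p : ℕ} (A : Matrix (Fin p) (Fin p) ℚ) :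
    ((algebraMap ℚ ℂ).mapMatrix A).trace = algebraMap ℚ ℂ A.trace := by
  simp [Matrix.trace, Matrix.diag, map_sum, RingHom.mapMatrix_apply]

lemma isIntegral_multiset_sum (s : Multiset ℂ) (h : ∀ x ∈ s, IsIntegral ℤ x) :
    IsIntegral ℤ s.sum := by
  induction s using Multiset.induction_on with
  | empty => simpa using isIntegral_zero
  | cons a s ih =>
      rw [Multiset.sum_cons]
      exact (h a (Multiset.mem_cons_self a s)).add
        (ih fun x hx => h x (Multiset.mem_cons_of_mem hx))

lemma norm_eq_one_of_pow {μ : ℂ} {N : ℕ} (hN : 1 ≤ N) (h : μ ^ N = 1) : ‖μ‖ = 1 := by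
  have h1 : ‖μ‖ ^ N = 1 := by rw [← norm_pow, h, norm_one]
  have h0 : (0:ℝ) ≤ ‖μ‖ := norm_nonneg μ
  rcases lt_trichotomy (‖μ‖) 1 with hlt | heq | hgt
  · exfalso
    have := pow_lt_one₀ h0 hlt (by omega : N ≠ 0)
    rw [h1] at this; exact lt_irrefl 1 this
  · exact heq
  · exfalso
    have := one_lt_pow₀ hgt (by omega : N ≠ 0)
    rw [h1] at this; exact lt_irrefl 1 this

lemma trace_int_of_pow_eq_one {p N : ℕ} (hp : 1 ≤ p) (hN : 1 ≤ N)
    (A : Matrix (Fin p) (Fin p) ℚ) (hA : A ^ N = 1) :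
    ∃ t : ℤ, (A.trace : ℚ) = (t : ℚ) ∧ -(p : ℤ) ≤ t ∧ t ≤ p ∧ (t = p → A = 1) := by
  have : Nonempty (Fin p) := ⟨⟨0, hp⟩⟩
  set B : Matrix (Fin p) (Fin p) ℂ := (algebraMap ℚ ℂ).mapMatrix A with hBdef
  have hBpow : B ^ N = 1 := by rw [hBdef, ← map_pow, hA, _root_.map_one]
  have hNC : ((N : ℕ) : ℂ) ≠ 0 := Nat.cast_ne_zero.mpr (by omega)
  have hfB : Polynomial.aeval B (X ^ N - C 1 : ℂ[X]) = 0 := by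
    simp [hBpow]
  have hsplits : Splits B.charpoly := IsAlgClosed.splits _
  set R := B.charpoly.roots with hRdef
  have hcard : Multiset.card R = p := by
    rw [hRdef, splits_iff_card_roots.mp hsplits, charpoly_natDegree_eq_dim, Fintype.card_fin]
  have hroot1 : ∀ μ ∈ R, μ ^ N = 1 := by
    intro μ hμ
    have h := eval_eq_zero_of_root_charpoly B _ hfB (isRoot_of_mem_roots hμ)
    simp only [eval_sub, eval_pow, eval_X, eval_C] at h
    exact sub_eq_zero.mp h
  have hnorm : ∀ μ ∈ R, ‖μ‖ = 1 := fun μ hμ => norm_eq_one_of_pow hN (hroot1 μ hμ)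
  have htraceB : B.trace = R.sum := trace_eq_sum_roots_charpoly B
  have htrmap : B.trace = algebraMap ℚ ℂ A.trace := trace_mapMatrix A
  have hint : IsIntegral ℤ B.trace := by
    rw [htraceB]
    refine isIntegral_multiset_sum R fun μ hμ => ?_
    exact ⟨X ^ N - C 1, monic_X_pow_sub_C 1 (by omega : N ≠ 0), by simp [hroot1 μ hμ]⟩
  have hintQ : IsIntegral ℤ (A.trace) :=
    (isIntegral_algebraMap_iff (algebraMap ℚ ℂ).injective).mp (htrmap ▸ hint)
  obtain ⟨t, ht⟩ := IsIntegrallyClosed.isIntegral_iff.mp hintQ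
  have htQ : (A.trace : ℚ) = (t : ℚ) := by
    rw [← ht]; simp
  have htC : B.trace = ((t : ℤ) : ℂ) := by
    rw [htrmap, ← ht]; push_cast; simp
  have hb : ‖B.trace‖ ≤ (p : ℝ) := by
    rw [htraceB]
    refine le_trans (norm_multiset_sum_le R) ?_
    have h := Multiset.sum_le_card_nsmul (R.map fun x => ‖x‖) 1 (by
      intro x hx
      obtain ⟨μ, hμ, rfl⟩ := Multiset.mem_map.mp hx
      exact le_of_eq (hnorm μ hμ))
    simpa [hcard] using h
  have hbt : |(t : ℝ)| ≤ (p : ℝ) := by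
    rw [htC, Complex.norm_intCast] at hb; exact hb
  refine ⟨t, htQ, by exact_mod_cast (abs_le.mp hbt).1, by exact_mod_cast (abs_le.mp hbt).2, ?_⟩
  intro htp
  have hsum : R.sum = (p : ℂ) := by
    rw [← htraceB, htC, htp]; push_cast; ring
  have hall : ∀ μ ∈ R, μ = 1 := by
    intro μ0 hμ0
    have hcons : μ0 ::ₘ R.erase μ0 = R := Multiset.cons_erase hμ0
    have hsum' : μ0 + (R.erase μ0).sum = (p : ℂ) := by
      have hc := Multiset.sum_cons μ0 (R.erase μ0)
      rw [hcons] at hc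
      rw [← hc, hsum]
    have hcR' : ((Multiset.card (R.erase μ0)) : ℝ) = (p : ℝ) - 1 := by
      have hc2 : Multiset.card (R.erase μ0) = p - 1 := by
        rw [Multiset.card_erase_of_mem hμ0, hcard, Nat.pred_eq_sub_one]
      rw [hc2]
      push_cast [Nat.cast_sub hp]
      ring
    have hnR' : ‖(R.erase μ0).sum‖ ≤ (p : ℝ) - 1 := by
      refine le_trans (norm_multiset_sum_le _) ?_
      have h := Multiset.sum_le_card_nsmul ((R.erase μ0).map fun x => ‖x‖) 1 (by
        intro x hx
        obtain ⟨μ, hμ, rfl⟩ := Multiset.mem_map.mp hx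
        exact le_of_eq (hnorm μ (Multiset.mem_of_mem_erase hμ)))
      simpa [hcR'] using h
    have hre : 1 ≤ μ0.re := by
      have h2 : μ0.re + ((R.erase μ0).sum).re = (p : ℝ) := by
        have := congrArg Complex.re hsum'
        simpa using this
      have h3 : ((R.erase μ0).sum).re ≤ ‖(R.erase μ0).sum‖ := by
        exact Complex.re_le_norm ((R.erase μ0).sum)
      linarith
    have hre2 : μ0.re ≤ 1 := by
      have h3 : μ0.re ≤ ‖μ0‖ := by
        exact Complex.re_le_norm μ0
      rw [hnorm μ0 hμ0] at h3; exact h3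
    have hre1 : μ0.re = 1 := le_antisymm hre2 hre
    have hnsq : Complex.normSq μ0 = 1 := by
      have h1 : ‖μ0‖ = 1 := hnorm μ0 hμ0
      have h2 : ‖μ0‖ = 1 := h1
      have := Complex.sq_norm μ0
      rw [h2] at this; simpa using this.symm
    have him : μ0.im = 0 := by
      have h1 := Complex.normSq_apply μ0
      rw [hnsq, hre1] at h1
      nlinarith [sq_nonneg μ0.im]
    exact Complex.ext (by simpa using hre1) (by simpa using him)
  have hmap : R.map (fun a => X - C a) = Multiset.replicate p (X - C (1:ℂ)) := by
    apply Multiset.eq_replicate.mpr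
    refine ⟨by simp [hcard], ?_⟩
    intro b hb'
    obtain ⟨μ, hμ, rfl⟩ := Multiset.mem_map.mp hb'
    rw [hall μ hμ]
  have hchar : B.charpoly = (X - C (1:ℂ)) ^ p := by
    rw [hsplits.eq_prod_roots_of_monic (charpoly_monic B),
      ← hRdef, hmap, Multiset.prod_replicate]
  have hintB : IsIntegral ℂ B := IsIntegral.of_finite ℂ B
  have hm1 : minpoly ℂ B ∣ X ^ N - C 1 := minpoly.dvd ℂ B hfB
  have hm2 : minpoly ℂ B ∣ (X - C (1:ℂ)) ^ p := by
    rw [← hchar]; exact minpoly.dvd ℂ B (aeval_self_charpoly B)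
  have hsep : (minpoly ℂ B).Separable :=
    (Polynomial.separable_X_pow_sub_C (1:ℂ) hNC one_ne_zero).of_dvd hm1
  obtain ⟨k, hkp, hassoc⟩ := (dvd_prime_pow (Polynomial.prime_X_sub_C (1:ℂ)) p).mp hm2
  have hmeq : minpoly ℂ B = (X - C (1:ℂ)) ^ k :=
    Polynomial.eq_of_monic_of_associated (minpoly.monic hintB)
      ((monic_X_sub_C (1:ℂ)).pow _) hassoc
  have hk1 : k = 1 := by
    rcases Nat.lt_or_ge k 1 with h | h
    · exfalso
      have hdeg := minpoly.natDegree_pos hintB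
      have hk0 : k = 0 := by omega
      rw [hmeq, hk0] at hdeg; simp at hdeg
    rcases Nat.lt_or_ge k 2 with h2 | h2
    · omega
    · exfalso
      have hsq : Squarefree (minpoly ℂ B) := hsep.squarefree
      have hdd : (X - C (1:ℂ)) * (X - C 1) ∣ minpoly ℂ B := by
        rw [hmeq, ← pow_two]; exact pow_dvd_pow _ h2
      exact Polynomial.not_isUnit_X_sub_C 1 (hsq _ hdd)
  have hB1 : B = 1 := by
    have haev := minpoly.aeval ℂ B
    rw [hmeq, hk1, pow_one] at haev
    simp only [map_sub, aeval_X, aeval_C] at haev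
    have : B - 1 = 0 := by simpa using haev
    exact sub_eq_zero.mp this
  ext i j
  apply (algebraMap ℚ ℂ).injective
  have hBij : B i j = ((1 : Matrix (Fin p) (Fin p) ℂ)) i j := by rw [hB1]
  rw [hBdef] at hBij
  simp only [RingHom.mapMatrix_apply, Matrix.map_apply] at hBij
  rw [hBij]
  by_cases hij : i = j <;> simp [Matrix.one_apply, hij]


def W (p : ℕ) : ℕ → Type
  | 0 => PUnit
  | m+1 => W p m × Fin p

def fintypeW (p : ℕ) : (m : ℕ) → Fintype (W p m)
  | 0 => inferInstanceAs (Fintype PUnit)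
  | m+1 => @instFintypeProd _ _ (fintypeW p m) inferInstance

instance (p m : ℕ) : Fintype (W p m) := fintypeW p m

def deqW (p : ℕ) : (m : ℕ) → DecidableEq (W p m)
  | 0 => inferInstanceAs (DecidableEq PUnit)
  | m+1 => @instDecidableEqProd _ _ (deqW p m) inferInstance

instance (p m : ℕ) : DecidableEq (W p m) := deqW p m

lemma nonemptyW (p : ℕ) (hp : 1 ≤ p) : ∀ m, Nonempty (W p m)
  | 0 => ⟨PUnit.unit⟩
  | m+1 => by
      obtain ⟨w⟩ := nonemptyW p hp m
      exact ⟨(w, ⟨0, hp⟩)⟩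

def F {p : ℕ} (A : Matrix (Fin p) (Fin p) ℂ) : (m : ℕ) → Matrix (W p m) (W p m) ℂ
  | 0 => 1
  | m+1 => (F A m) ⊗ₖ A

lemma F_mul {p : ℕ} (A B : Matrix (Fin p) (Fin p) ℂ) :
    ∀ m, F (A * B) m = F A m * F B m
  | 0 => by simp [F]
  | m+1 => by
      show (F (A*B) m) ⊗ₖ (A*B) = ((F A m) ⊗ₖ A) * ((F B m) ⊗ₖ B)
      rw [F_mul A B m, Matrix.mul_kronecker_mul]

lemma trace_F {p : ℕ} (A : Matrix (Fin p) (Fin p) ℂ) :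
    ∀ m, (F A m).trace = A.trace ^ m
  | 0 => by
      simp only [F, Matrix.trace_one, pow_zero]
      norm_cast
  | m+1 => by
      show ((F A m) ⊗ₖ A).trace = A.trace ^ (m+1)
      rw [Matrix.trace_kronecker, trace_F A m, pow_succ]

end Stmt18Aux

/-- **Order of finite subgroups of `GL_p(ℚ)`**: for every `p ≥ 1`, every finite subgroup
of `GL_p(ℚ)` has order at most `(2p)!`. -/
theorem stmt18 (p : ℕ) (hp : 1 ≤ p) (H : Subgroup (GL (Fin p) ℚ))
    (hH : (H : Set (GL (Fin p) ℚ)).Finite) :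
    Nat.card H ≤ (2 * p).factorial := by
  classical
  have hfin : Finite H := hH.to_subtype
  have hft : Fintype H := Fintype.ofFinite _
  set N := Nat.card H with hNdef
  have hN1 : 1 ≤ N := Nat.card_pos
  have hNE : Nonempty (Fin p) := ⟨⟨0, hp⟩⟩
  have hmx : ∀ x : H, ((x : GL (Fin p) ℚ) : Matrix (Fin p) (Fin p) ℚ) ^ N = 1 := by
    intro x
    have hx : x ^ N = 1 := pow_card_eq_one'
    have hx2 : ((x : GL (Fin p) ℚ)) ^ N = 1 := by
      have := congrArg (fun y : H => (y : GL (Fin p) ℚ)) hx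
      simpa using this
    have := congrArg (fun u : GL (Fin p) ℚ => (u : Matrix (Fin p) (Fin p) ℚ)) hx2
    simpa using this
  choose t htr hlb hub hteq using fun x : H =>
    Stmt18Aux.trace_int_of_pow_eq_one hp hN1 _ (hmx x)
  have ht1 : t 1 = (p : ℤ) := by
    have h1 : (((1 : H) : GL (Fin p) ℚ) : Matrix (Fin p) (Fin p) ℚ)
        = (1 : Matrix (Fin p) (Fin p) ℚ) := by simp
    have h2 := htr 1
    rw [h1, Matrix.trace_one] at h2
    have h3 : ((p : ℤ) : ℚ) = ((t 1 : ℤ) : ℚ) := by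
      rw [← h2]; simp
    exact_mod_cast h3.symm
  set φ : H → Matrix (Fin p) (Fin p) ℂ :=
    fun x => (algebraMap ℚ ℂ).mapMatrix ((x : GL (Fin p) ℚ) : Matrix (Fin p) (Fin p) ℚ) with hφ
  have hφmul : ∀ x y : H, φ (x * y) = φ x * φ y := by
    intro x y
    simp only [hφ, ← _root_.map_mul]
    congr 1
  have htrφ : ∀ x : H, (φ x).trace = ((t x : ℤ) : ℂ) := by
    intro x
    simp only [hφ]
    rw [Stmt18Aux.trace_mapMatrix, htr x]
    simp
  have hdvd : ∀ m : ℕ, ∃ k : ℕ, (∑ x : H, (t x) ^ m) = (k : ℤ) * N := by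
    intro m
    have hne : Nonempty (Stmt18Aux.W p m) := Stmt18Aux.nonemptyW p hp m
    set S : Matrix (Stmt18Aux.W p m) (Stmt18Aux.W p m) ℂ :=
      ∑ x : H, Stmt18Aux.F (φ x) m with hS
    have hSS : S * S = (N : ℂ) • S := by
      rw [hS, Finset.sum_mul_sum]
      have hinner : ∀ x : H,
          (∑ y : H, Stmt18Aux.F (φ x) m * Stmt18Aux.F (φ y) m) = S := by
        intro x
        calc (∑ y : H, Stmt18Aux.F (φ x) m * Stmt18Aux.F (φ y) m)
            = ∑ y : H, Stmt18Aux.F (φ (x * y)) m :=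
              Finset.sum_congr rfl fun y _ => by rw [hφmul, Stmt18Aux.F_mul]
          _ = ∑ y : H, Stmt18Aux.F (φ y) m :=
              Fintype.sum_equiv (Equiv.mulLeft x)
                (fun y => Stmt18Aux.F (φ (x * y)) m)
                (fun y => Stmt18Aux.F (φ y) m) (fun y => rfl)
          _ = S := by rw [hS]
      rw [Finset.sum_congr rfl fun x _ => hinner x, Finset.sum_const, Finset.card_univ,
        hNdef, Nat.card_eq_fintype_card]
      exact (Nat.cast_smul_eq_nsmul ℂ _ S).symm
    obtain ⟨k, hk⟩ := Stmt18Aux.exists_nat_trace_eq S hSS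
    have htrS : S.trace = ((∑ x : H, (t x) ^ m : ℤ) : ℂ) := by
      rw [hS, Matrix.trace_sum]
      push_cast
      exact Finset.sum_congr rfl fun x _ => by rw [Stmt18Aux.trace_F, htrφ x]
    rw [htrS] at hk
    exact ⟨k, by exact_mod_cast hk⟩
  have key : ∀ f : Polynomial ℤ, (N : ℤ) ∣ ∑ x : H, Polynomial.eval (t x) f := by
    intro f
    induction f using Polynomial.induction_on' with
    | add g h hg hh =>
        simp only [Polynomial.eval_add, Finset.sum_add_distrib]
        exact dvd_add hg hh
    | monomial n a =>
        simp only [Polynomial.eval_monomial]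
        rw [← Finset.mul_sum]
        obtain ⟨k, hk⟩ := hdvd n
        rw [hk]
        exact Dvd.dvd.mul_left ⟨(k:ℤ), mul_comm _ _⟩ a
  set P : Polynomial ℤ :=
    ∏ j ∈ Finset.range (2*p), (Polynomial.X - Polynomial.C ((j : ℤ) - p)) with hP
  have hev1 : Polynomial.eval ((p : ℤ)) P = ((2*p).factorial : ℤ) := by
    rw [hP, Polynomial.eval_prod]
    have hc : ∀ j ∈ Finset.range (2*p),
        Polynomial.eval ((p:ℤ)) (Polynomial.X - Polynomial.C ((j:ℤ) - p))
          = ((2*p - j : ℕ) : ℤ) := by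
      intro j hj
      have hj' : j < 2*p := Finset.mem_range.mp hj
      rw [Polynomial.eval_sub, Polynomial.eval_X, Polynomial.eval_C]
      push_cast [Nat.cast_sub hj'.le]
      ring
    rw [Finset.prod_congr rfl hc, ← Nat.cast_prod]
    congr 1
    calc ∏ j ∈ Finset.range (2*p), (2*p - j)
        = ∏ j ∈ Finset.range (2*p), ((2*p) - 1 - j + 1) := by
          refine Finset.prod_congr rfl fun j hj => ?_
          have := Finset.mem_range.mp hj; omega
      _ = ∏ j ∈ Finset.range (2*p), (j + 1) :=
          Finset.prod_range_reflect (fun j => j + 1) (2*p)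
      _ = (2*p).factorial := Finset.prod_range_add_one_eq_factorial (2*p)
  have hsum : ∑ x : H, Polynomial.eval (t x) P = ((2*p).factorial : ℤ) := by
    rw [Finset.sum_eq_single (1 : H)]
    · rw [ht1, hev1]
    · intro x _ hx1
      have hxne : t x ≠ (p : ℤ) := by
        intro hcontra
        apply hx1
        have hm := hteq x hcontra
        have hu : (x : GL (Fin p) ℚ) = 1 := Units.ext hm
        exact Subtype.ext hu
      have h1 : t x + p < 2*p := by
        have h := hub x
        rcases lt_or_eq_of_le h with h' | h'
        · omega
        · exact absurd h' hxne
      have h0 : 0 ≤ t x + p := by have := hlb x; omega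
      set j0 : ℕ := (t x + p).toNat with hj0
      have hj0c : (j0 : ℤ) = t x + p := Int.toNat_of_nonneg h0
      have hj0r : j0 ∈ Finset.range (2*p) := by
        rw [Finset.mem_range]; omega
      rw [hP, Polynomial.eval_prod]
      refine Finset.prod_eq_zero hj0r ?_
      rw [Polynomial.eval_sub, Polynomial.eval_X, Polynomial.eval_C]
      omega
    · intro h; exact absurd (Finset.mem_univ 1) h
  have hdv := key P
  rw [hsum] at hdv
  have hle := Int.le_of_dvd (by positivity) hdv
  exact_mod_cast hle



end
end

section
/- For every n ≥ 1, the Zariski closure of SL_n(ℤ) in GL_n(ℚ̄) equals SL_n(ℚ̄); that is, the smallest algebraic subset of ℚ̄^{n²+1} containing {(M,1) : M ∈ SL_n(ℤ)} is {(M,1) : M ∈ GL_n(ℚ̄), det(M) = 1}. -/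
noncomputable section

open scoped MatrixGroups
open MvPolynomial

section Aux

open Matrix

variable {n : ℕ}

/-- The set of points of `ℚ̄^{n²+1}` coming from `SL_n(ℤ)`. -/
def Yset (n : ℕ) : Set (glIdx n → Qbar) :=
  {a | ∃ M : Matrix (Fin n) (Fin n) ℤ, M.det = 1 ∧
      a = Sum.elim (fun p => ((M p.1 p.2 : ℤ) : Qbar)) (fun _ => 1)}

/-- The point attached to a matrix, with last coordinate `1`. -/
def ptM (M : Matrix (Fin n) (Fin n) Qbar) : glIdx n → Qbar :=
  Sum.elim (fun p => M p.1 p.2) (fun _ => 1)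

/-- `M` is good if every polynomial vanishing on the `SL_n(ℤ)` points vanishes at `ptM M`. -/
def GoodM (M : Matrix (Fin n) (Fin n) Qbar) : Prop :=
  ∀ f : MvPolynomial (glIdx n) Qbar, (∀ a ∈ Yset n, eval a f = 0) → eval (ptM M) f = 0

lemma ptM_intCast (M : Matrix (Fin n) (Fin n) ℤ) :
    ptM (M.map (Int.cast : ℤ → Qbar)) =
      Sum.elim (fun p => ((M p.1 p.2 : ℤ) : Qbar)) (fun _ => 1) := by
  funext x
  cases x with
  | inl p => simp [ptM, Matrix.map_apply]
  | inr u => rfl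

lemma GoodM.int (M : Matrix (Fin n) (Fin n) ℤ) (h : M.det = 1) :
    GoodM (M.map (Int.cast : ℤ → Qbar)) := by
  intro f hf
  rw [ptM_intCast]
  exact hf _ ⟨M, h, rfl⟩

lemma GoodM.one : GoodM (1 : Matrix (Fin n) (Fin n) Qbar) := by
  have h := GoodM.int (1 : Matrix (Fin n) (Fin n) ℤ) (by simp)
  rwa [Matrix.map_one _ Int.cast_zero Int.cast_one] at h

/-- Right-multiplication substitution. -/
def subR (B : Matrix (Fin n) (Fin n) Qbar) : glIdx n → MvPolynomial (glIdx n) Qbar :=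
  Sum.elim (fun p => ∑ r, X (Sum.inl (p.1, r)) * C (B r p.2)) (fun _ => X (Sum.inr ()))

/-- Left-multiplication substitution. -/
def subL (A : Matrix (Fin n) (Fin n) Qbar) : glIdx n → MvPolynomial (glIdx n) Qbar :=
  Sum.elim (fun p => ∑ r, C (A p.1 r) * X (Sum.inl (r, p.2))) (fun _ => X (Sum.inr ()))

lemma eval_bind_subR (M B : Matrix (Fin n) (Fin n) Qbar) (f : MvPolynomial (glIdx n) Qbar) :
    eval (ptM M) (bind₁ (subR B) f) = eval (ptM (M * B)) f := by
  have h := eval₂Hom_bind₁ (RingHom.id Qbar) (ptM M) (subR B) f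
  have h2 : (fun i => eval (ptM M) (subR B i)) = ptM (M * B) := by
    funext x
    cases x with
    | inl p => simp [subR, ptM, Matrix.mul_apply]
    | inr u => simp [subR, ptM]
  calc eval (ptM M) (bind₁ (subR B) f)
      = eval (fun i => eval (ptM M) (subR B i)) f := h
    _ = eval (ptM (M * B)) f := by rw [h2]

lemma eval_bind_subL (M A : Matrix (Fin n) (Fin n) Qbar) (f : MvPolynomial (glIdx n) Qbar) :
    eval (ptM M) (bind₁ (subL A) f) = eval (ptM (A * M)) f := by
  have h := eval₂Hom_bind₁ (RingHom.id Qbar) (ptM M) (subL A) f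
  have h2 : (fun i => eval (ptM M) (subL A i)) = ptM (A * M) := by
    funext x
    cases x with
    | inl p => simp [subL, ptM, Matrix.mul_apply]
    | inr u => simp [subL, ptM]
  calc eval (ptM M) (bind₁ (subL A) f)
      = eval (fun i => eval (ptM M) (subL A i)) f := h
    _ = eval (ptM (A * M)) f := by rw [h2]

lemma GoodM.mul_int {M : Matrix (Fin n) (Fin n) Qbar} (hM : GoodM M)
    (N : Matrix (Fin n) (Fin n) ℤ) (hN : N.det = 1) :
    GoodM (M * N.map (Int.cast : ℤ → Qbar)) := by
  intro f hf
  have hf' : ∀ a ∈ Yset n, eval a (bind₁ (subR (N.map Int.cast)) f) = 0 := by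
    rintro a ⟨P, hP, rfl⟩
    rw [← ptM_intCast, eval_bind_subR]
    have hPN : (P * N).map (Int.cast : ℤ → Qbar) =
        P.map Int.cast * N.map Int.cast := by
      have := Matrix.map_mul (L := P) (M := N) (f := Int.castRingHom Qbar)
      simpa using this
    rw [← hPN, ptM_intCast]
    exact hf _ ⟨P * N, by rw [Matrix.det_mul, hP, hN, one_mul], rfl⟩
  have h := hM _ hf'
  rwa [eval_bind_subR] at h

lemma GoodM.mul {M N : Matrix (Fin n) (Fin n) Qbar} (hM : GoodM M) (hN : GoodM N) :
    GoodM (M * N) := by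
  intro f hf
  have hf' : ∀ a ∈ Yset n, eval a (bind₁ (subL M) f) = 0 := by
    rintro a ⟨P, hP, rfl⟩
    rw [← ptM_intCast, eval_bind_subL]
    exact hM.mul_int P hP f hf
  have h := hN _ hf'
  rwa [eval_bind_subL] at h

lemma GoodM.transvection {i j : Fin n} (hij : i ≠ j) (c : Qbar) :
    GoodM (Matrix.transvection i j c) := by
  intro f hf
  set φ : glIdx n → Polynomial Qbar :=
    Sum.elim (fun p => Polynomial.C ((1 : Matrix (Fin n) (Fin n) Qbar) p.1 p.2)
      + if i = p.1 ∧ j = p.2 then Polynomial.X else 0) (fun _ => 1) with hφ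
  set F : Polynomial Qbar := eval₂ Polynomial.C φ f with hF
  have key : ∀ t : Qbar, F.eval t = eval (ptM (Matrix.transvection i j t)) f := by
    intro t
    have h1 := eval₂_comp_left (Polynomial.evalRingHom t) Polynomial.C φ f
    have h2 : (Polynomial.evalRingHom t).comp Polynomial.C = RingHom.id Qbar := by
      ext x; simp
    rw [h2] at h1
    have h3 : ((Polynomial.evalRingHom t) ∘ φ) = ptM (Matrix.transvection i j t) := by
      funext x
      cases x with
      | inl p =>
        simp only [hφ, Function.comp_apply, Sum.elim_inl, map_add, Polynomial.coe_evalRingHom,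
          Polynomial.eval_C, ptM, Matrix.transvection, Matrix.add_apply, Matrix.smul_apply,
          Matrix.single, Matrix.of_apply, smul_eq_mul, mul_ite, mul_one, mul_zero,
          apply_ite (Polynomial.eval t), Polynomial.eval_X, Polynomial.eval_zero]
        split_ifs <;> simp
      | inr u =>
        simp [hφ, ptM]
    rw [h3] at h1
    rw [eval₂_id] at h1
    exact h1
  have hroot : ∀ k : ℤ, F.IsRoot ((k : ℤ) : Qbar) := by
    intro k
    have hmap : (Matrix.transvection i j (k : ℤ)).map (Int.cast : ℤ → Qbar) =
        Matrix.transvection i j ((k : ℤ) : Qbar) := by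
      ext a b
      simp only [Matrix.transvection, Matrix.map_apply, Matrix.add_apply, Matrix.smul_apply,
        Matrix.single, Matrix.of_apply, Matrix.one_apply, smul_eq_mul]
      split_ifs <;> push_cast <;> ring
    show F.eval ((k : ℤ) : Qbar) = 0
    rw [key]
    rw [← hmap, ptM_intCast]
    exact hf _ ⟨Matrix.transvection i j (k : ℤ),
      Matrix.det_transvection_of_ne i j hij (k : ℤ), rfl⟩
  have hF0 : F = 0 := by
    apply Polynomial.eq_zero_of_infinite_isRoot
    apply Set.Infinite.mono (s := Set.range (fun k : ℤ => ((k : ℤ) : Qbar)))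
    · rintro _ ⟨k, rfl⟩
      exact hroot k
    · exact Set.infinite_range_of_injective (fun x y h => by exact_mod_cast h)
  have := key c
  rw [hF0] at this
  simpa using this.symm



lemma transvec_mul_eq_updateRow (i j : Fin n) (c : Qbar) (M : Matrix (Fin n) (Fin n) Qbar) :
    Matrix.transvection i j c * M = M.updateRow i (fun b => M i b + c * M j b) := by
  ext a b
  by_cases h : a = i
  · subst h
    rw [Matrix.transvection_mul_apply_same, Matrix.updateRow_self]
  · rw [Matrix.transvection_mul_apply_of_ne i j a b h c M, Matrix.updateRow_ne h]

lemma h_matrix_eq (i j : Fin n) (hij : i ≠ j) (a : Qbar) (ha : a ≠ 0) :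
    Matrix.transvection i j a * (Matrix.transvection j i (-a⁻¹) * (Matrix.transvection i j a *
      (Matrix.transvection i j (-1) * (Matrix.transvection j i 1 *
        Matrix.transvection i j (-1))))) =
      Matrix.diagonal (fun k => if k = i then a else if k = j then a⁻¹ else 1) := by
  rw [transvec_mul_eq_updateRow, transvec_mul_eq_updateRow, transvec_mul_eq_updateRow,
    transvec_mul_eq_updateRow, transvec_mul_eq_updateRow]
  ext p q
  by_cases hp : p = i
  · by_cases hq : q = i
    · simp [hp, hq, hij, hij.symm, Matrix.updateRow_apply, Matrix.one_apply,
        Matrix.diagonal_apply, Matrix.transvection, Matrix.single, Matrix.add_apply,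
        Matrix.smul_apply, smul_eq_mul, Matrix.of_apply]
      simp [ha]
    · by_cases hq2 : q = j
      · simp [hp, hq2, hij, hij.symm, Matrix.updateRow_apply, Matrix.one_apply,
          Matrix.diagonal_apply, Matrix.transvection, Matrix.single, Matrix.add_apply,
          Matrix.smul_apply, smul_eq_mul, Matrix.of_apply]
        simp [ha]
      · simp [hp, hq, hq2, Ne.symm hq, Ne.symm hq2, hij, hij.symm, Matrix.updateRow_apply,
          Matrix.one_apply, Matrix.diagonal_apply, Matrix.transvection, Matrix.single,
          Matrix.add_apply, Matrix.smul_apply, smul_eq_mul, Matrix.of_apply]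
  · by_cases hp2 : p = j
    · by_cases hq : q = i
      · simp [hp2, hq, hij, hij.symm, Matrix.updateRow_apply, Matrix.one_apply,
          Matrix.diagonal_apply, Matrix.transvection, Matrix.single, Matrix.add_apply,
          Matrix.smul_apply, smul_eq_mul, Matrix.of_apply]
        simp [ha]
      · by_cases hq2 : q = j
        · simp [hp2, hq2, hij, hij.symm, Matrix.updateRow_apply, Matrix.one_apply,
            Matrix.diagonal_apply, Matrix.transvection, Matrix.single, Matrix.add_apply,
            Matrix.smul_apply, smul_eq_mul, Matrix.of_apply]
        · simp [hp2, hq, hq2, Ne.symm hq, Ne.symm hq2, hij, hij.symm, Matrix.updateRow_apply,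
            Matrix.one_apply, Matrix.diagonal_apply, Matrix.transvection, Matrix.single,
            Matrix.add_apply, Matrix.smul_apply, smul_eq_mul, Matrix.of_apply]
    · simp [hp, hp2, Ne.symm hp, Ne.symm hp2, hij, hij.symm, Matrix.updateRow_apply,
        Matrix.one_apply, Matrix.diagonal_apply, Matrix.transvection, Matrix.single,
        Matrix.add_apply, Matrix.smul_apply, smul_eq_mul, Matrix.of_apply]

lemma GoodM.hdiag (i j : Fin n) (hij : i ≠ j) (a : Qbar) (ha : a ≠ 0) :
    GoodM (Matrix.diagonal (fun k => if k = i then a else if k = j then a⁻¹ else 1)) := by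
  rw [← h_matrix_eq i j hij a ha]
  exact (GoodM.transvection hij a).mul ((GoodM.transvection hij.symm (-a⁻¹)).mul
    ((GoodM.transvection hij a).mul ((GoodM.transvection hij (-1)).mul
      ((GoodM.transvection hij.symm 1).mul (GoodM.transvection hij (-1))))))

lemma GoodM.diagonal (d : Fin n → Qbar) (hd : ∏ k, d k = 1) :
    GoodM (Matrix.diagonal d) := by
  have hne : ∀ k, d k ≠ 0 := by
    intro k hk
    rw [Finset.prod_eq_zero (Finset.mem_univ k) hk] at hd
    exact zero_ne_one hd
  rcases Nat.eq_zero_or_pos n with h0 | h0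
  · have : Matrix.diagonal d = 1 := by
      ext p q
      exact absurd p.2 (by omega)
    rw [this]; exact GoodM.one
  · set i₀ : Fin n := ⟨0, h0⟩ with hi₀
    set e : Fin n → Fin n → Qbar :=
      fun i k => if k = i then d i else if k = i₀ then (d i)⁻¹ else 1 with he
    have hkey : ∀ s : Finset (Fin n), s ⊆ Finset.univ.erase i₀ →
        GoodM (Matrix.diagonal (∏ i ∈ s, e i)) := by
      intro s
      induction s using Finset.induction_on with
      | empty =>
        intro _
        simpa using (GoodM.one (n := n))
      | insert b t hnotmem ih =>
        intro hsub
        rw [Finset.prod_insert hnotmem]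
        have : Matrix.diagonal (e b * ∏ i ∈ t, e i) =
            Matrix.diagonal (e b) * Matrix.diagonal (∏ i ∈ t, e i) := by
          rw [Matrix.diagonal_mul_diagonal]
          rfl
        rw [this]
        have hb : b ≠ i₀ := Finset.ne_of_mem_erase (hsub (Finset.mem_insert_self b t))
        exact (GoodM.hdiag b i₀ hb (d b) (hne b)).mul
          (ih (fun x hx => hsub (Finset.mem_insert_of_mem hx)))
    have hprod : (∏ i ∈ Finset.univ.erase i₀, e i) = d := by
      funext k
      rw [Finset.prod_apply]
      by_cases hk : k = i₀
      · subst hk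
        have h1 : ∀ i ∈ Finset.univ.erase i₀, e i i₀ = (d i)⁻¹ := by
          intro i hi
          have hne' : i₀ ≠ i := Ne.symm (Finset.ne_of_mem_erase hi)
          simp [he, hne']
        rw [Finset.prod_congr rfl h1, Finset.prod_inv_distrib]
        have h2 : d i₀ * ∏ i ∈ Finset.univ.erase i₀, d i = 1 := by
          rw [Finset.mul_prod_erase Finset.univ d (Finset.mem_univ i₀)]
          exact hd
        rw [eq_inv_of_mul_eq_one_right h2, inv_inv]
      · have h1 : ∀ i ∈ Finset.univ.erase i₀, e i k = if k = i then d i else 1 := by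
          intro i hi
          simp [he, hk]
        rw [Finset.prod_congr rfl h1]
        have h2 : ∀ i, (if k = i then d i else 1) = (if k = i then d k else 1) := by
          intro i
          by_cases h : k = i
          · subst h; rfl
          · simp [h]
        simp only [h2]
        rw [Finset.prod_ite_eq]
        simp [hk]
    have := hkey (Finset.univ.erase i₀) le_rfl
    rwa [hprod] at this
lemma GoodM.listProd (L : List (Matrix.TransvectionStruct (Fin n) Qbar)) :
    GoodM (L.map Matrix.TransvectionStruct.toMatrix).prod := by
  induction L with
  | nil => simpa using (GoodM.one (n := n))
  | cons t L ih =>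
    rw [List.map_cons, List.prod_cons]
    have ht : t.toMatrix = Matrix.transvection t.i t.j t.c := rfl
    rw [ht]
    exact (GoodM.transvection t.hij t.c).mul ih

lemma det_listProd (L : List (Matrix.TransvectionStruct (Fin n) Qbar)) :
    ((L.map Matrix.TransvectionStruct.toMatrix).prod).det = 1 := by
  induction L with
  | nil => simp
  | cons t L ih =>
    rw [List.map_cons, List.prod_cons, Matrix.det_mul, ih, t.det, one_mul]

lemma GoodM.of_det_one (M : Matrix (Fin n) (Fin n) Qbar) (h : M.det = 1) : GoodM M := by
  obtain ⟨L, L', D, hM⟩ := Matrix.Pivot.exists_list_transvec_mul_diagonal_mul_list_transvec M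
  have hD : ∏ k, D k = 1 := by
    have := h
    rw [hM, Matrix.det_mul, Matrix.det_mul, det_listProd, det_listProd,
      Matrix.det_diagonal, one_mul, mul_one] at this
    exact this
  rw [hM]
  have hdd := GoodM.diagonal (n := n) D hD
  exact GoodM.mul (GoodM.mul (GoodM.listProd L) hdd) (GoodM.listProd L')

end Aux


/-- **Zariski closure of `SL_n(ℤ)`**: for every `n ≥ 1`, the smallest algebraic subset of
`ℚ̄^{n²+1}` containing `{(M,1) : M ∈ SL_n(ℤ)}` equals
`{(M,1) : M ∈ GL_n(ℚ̄), det M = 1}`. -/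
theorem stmt19 (n : ℕ) (hn : 1 ≤ n) :
    zariskiClosure {a : glIdx n → Qbar |
        ∃ M : Matrix (Fin n) (Fin n) ℤ, M.det = 1 ∧
          a = Sum.elim (fun p => ((M p.1 p.2 : ℤ) : Qbar)) (fun _ => 1)} =
      {a : glIdx n → Qbar | (pointMatrix a).det = 1 ∧ a (Sum.inr ()) = 1} := by
  apply Set.Subset.antisymm
  · intro a ha
    have hdet : ∀ b : glIdx n → Qbar,
        eval b ((Matrix.of fun i j => (X (Sum.inl (i, j)) : MvPolynomial (glIdx n) Qbar)).det) =
          (pointMatrix b).det := by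
      intro b
      rw [RingHom.map_det (eval b)]
      congr 1
      ext i j
      simp [pointMatrix, Matrix.map_apply]
    constructor
    · have h1 := ha ((Matrix.of fun i j => (X (Sum.inl (i, j)) : MvPolynomial (glIdx n) Qbar)).det
        - 1) ?_
      · rw [map_sub, hdet, map_one, sub_eq_zero] at h1
        exact h1
      · rintro b ⟨M, hM, rfl⟩
        rw [map_sub, hdet, map_one, sub_eq_zero]
        have hb : pointMatrix (Sum.elim (fun p : Fin n × Fin n => ((M p.1 p.2 : ℤ) : Qbar))
            (fun _ => 1)) = M.map (Int.cast : ℤ → Qbar) := by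
          ext i j
          rfl
        rw [hb]
        have : ((Int.castRingHom Qbar).mapMatrix M).det = (Int.castRingHom Qbar) M.det :=
          (RingHom.map_det (Int.castRingHom Qbar) M).symm
        have hmm : M.map (Int.cast : ℤ → Qbar) = (Int.castRingHom Qbar).mapMatrix M := rfl
        rw [hmm, this, hM]
        simp
    · have h2 := ha ((X (Sum.inr ()) : MvPolynomial (glIdx n) Qbar) - 1) ?_
      · rw [map_sub, eval_X, map_one, sub_eq_zero] at h2
        exact h2
      · rintro b ⟨M, hM, rfl⟩
        rw [map_sub, eval_X, map_one, sub_eq_zero]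
        rfl
  · rintro a ⟨h1, h2⟩
    intro f hf
    have ha : a = ptM (pointMatrix a) := by
      funext x
      cases x with
      | inl p => rfl
      | inr u => cases u; exact h2
    rw [ha]
    exact GoodM.of_det_one (pointMatrix a) h1 f hf
end
end
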